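/- arXiv:2411.01496 — 2 statements merged into one kernel-verified Lean document; each statement's English description precedes it below -/
import Mathlib

section
/- Let p, q, ρ be nonnegative integers. Then the Hamming ball B_ρ[p,q] is a LYM poset: for every antichain A of subsets S ⊆ {1,...,p+q} with |S △ {1,...,p}| ≤ ρ (an antichain with respect to inclusion), one has ∑_{S∈A} 1/N_{r(S)} ≤ 1, where r(S) and N_m are the rank and layer sizes of B_ρ[p,q]. -/
open Finset

/-- Membership in the Hamming ball `B_ρ[p,q]`: subsets `S ⊆ {1,…,p+q}` whose symmetric
difference with `{1,…,p}` has size at most `ρ`. -/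
def memHammingBall (p q ρ : ℕ) (S : Finset ℕ) : Prop :=
  S ⊆ Finset.Icc 1 (p + q) ∧ (symmDiff S (Finset.Icc 1 p)).card ≤ ρ

/-- The rank of `S` in the Hamming ball `B_ρ[p,q]`: with `i = |{1,…,p} \ S|` and
`j = |S \ {1,…,p}|`, the rank is `min p ρ - i + j`. -/
def hammingRank (p ρ : ℕ) (S : Finset ℕ) : ℕ :=
  min p ρ - (Finset.Icc 1 p \ S).card + (S \ Finset.Icc 1 p).card

/-- The size of the `m`-th layer of the Hamming ball `B_ρ[p,q]`:
`N_m = ∑ C(p,i) C(q,j)` over pairs `(i,j)` with `0 ≤ i ≤ p`, `0 ≤ j ≤ q`, `i + j ≤ ρ`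
and `min p ρ - i + j = m`. -/
def hammingLayerSize (p q ρ m : ℕ) : ℕ :=
  ∑ ij ∈ (Finset.range (p + 1) ×ˢ Finset.range (q + 1)).filter
      (fun ij => ij.1 + ij.2 ≤ ρ ∧ min p ρ - ij.1 + ij.2 = m),
    p.choose ij.1 * q.choose ij.2

namespace HBLYM

/-- `i`-coordinate. -/
def icoord (p : ℕ) (S : Finset ℕ) : ℕ := (Finset.Icc 1 p \ S).card
/-- `j`-coordinate. -/
def jcoord (p : ℕ) (S : Finset ℕ) : ℕ := (S \ Finset.Icc 1 p).card

def coeff (p q ρ m j : ℕ) : ℕ :=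
  if m ≤ min p ρ + j ∧ min p ρ + j - m ≤ p ∧ j ≤ q ∧ (min p ρ + j - m) + j ≤ ρ then
    p.choose (min p ρ + j - m) * q.choose j
  else 0

def G (p q ρ m k : ℕ) : ℕ := ∑ j ∈ Finset.range k, coeff p q ρ m j

def NN (p q ρ m : ℕ) : ℕ := G p q ρ m (q + 1)

instance (p q ρ : ℕ) (S : Finset ℕ) : Decidable (memHammingBall p q ρ S) := by
  unfold memHammingBall; infer_instance

def ball (p q ρ : ℕ) : Finset (Finset ℕ) :=
  (Finset.Icc 1 (p + q)).powerset.filter (memHammingBall p q ρ)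

def layer (p q ρ m : ℕ) : Finset (Finset ℕ) :=
  (ball p q ρ).filter fun S => hammingRank p ρ S = m

variable {p q ρ : ℕ}

lemma mem_ball_iff {S : Finset ℕ} :
    S ∈ ball p q ρ ↔ S ⊆ Finset.Icc 1 (p + q) ∧ icoord p S + jcoord p S ≤ ρ := by
  have hsd : (symmDiff S (Finset.Icc 1 p)).card = jcoord p S + icoord p S := by
    rw [symmDiff_def]
    have : Disjoint (S \ Finset.Icc 1 p) (Finset.Icc 1 p \ S) := disjoint_sdiff_sdiff
    simpa [icoord, jcoord] using Finset.card_union_of_disjoint this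
  constructor
  · rintro hS
    rw [ball, mem_filter, mem_powerset] at hS
    exact ⟨hS.1, by have := hS.2.2; omega⟩
  · rintro ⟨h1, h2⟩
    rw [ball, mem_filter, mem_powerset]
    exact ⟨h1, h1, by omega⟩

lemma icoord_le (S : Finset ℕ) : icoord p S ≤ p := by
  have := Finset.card_le_card (Finset.sdiff_subset (s := Finset.Icc 1 p) (t := S))
  simpa [icoord, Nat.card_Icc] using this

lemma sdiff_subset_I2 {S : Finset ℕ} (hS : S ⊆ Finset.Icc 1 (p + q)) :
    S \ Finset.Icc 1 p ⊆ Finset.Icc (p + 1) (p + q) := by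
  intro x hx
  rw [mem_sdiff] at hx
  have := hS hx.1
  have h2 := hx.2
  simp only [mem_Icc] at *
  omega

lemma jcoord_le {S : Finset ℕ} (hS : S ⊆ Finset.Icc 1 (p + q)) : jcoord p S ≤ q := by
  have := Finset.card_le_card (sdiff_subset_I2 hS)
  simpa [jcoord, Nat.card_Icc] using this

lemma card_coords {S : Finset ℕ} (hS : S ⊆ Finset.Icc 1 (p + q)) :
    S.card + icoord p S = p + jcoord p S := by
  have h1 := Finset.card_inter_add_card_sdiff S (Finset.Icc 1 p)
  have h2 := Finset.card_inter_add_card_sdiff (Finset.Icc 1 p) S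
  rw [Finset.inter_comm] at h2
  have h3 : (Finset.Icc 1 p).card = p := by simp [Nat.card_Icc]
  unfold icoord jcoord
  omega

lemma rank_add {S : Finset ℕ} (hS : S ∈ ball p q ρ) :
    hammingRank p ρ S + icoord p S = min p ρ + jcoord p S := by
  rw [mem_ball_iff] at hS
  have h1 : icoord p S ≤ p := icoord_le S
  unfold hammingRank
  have h2 : icoord p S + jcoord p S ≤ ρ := hS.2
  unfold icoord jcoord at *
  omega

lemma rank_card {S : Finset ℕ} (hS : S ∈ ball p q ρ) :
    hammingRank p ρ S + p = S.card + min p ρ := by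
  have h1 := rank_add hS
  have h2 := card_coords (mem_ball_iff.mp hS).1
  have h3 := icoord_le (p := p) S
  omega



lemma choose_logconcave (n a b : ℕ) (h : a ≤ b) :
    n.choose a * n.choose (b + 1) ≤ n.choose (a + 1) * n.choose b := by
  have h1 := Nat.choose_succ_right_eq n a
  have h2 := Nat.choose_succ_right_eq n b
  have key : n.choose a * n.choose (b + 1) * ((a + 1) * (b + 1))
      ≤ n.choose (a + 1) * n.choose b * ((a + 1) * (b + 1)) := by
    have e1 : n.choose a * n.choose (b + 1) * ((a + 1) * (b + 1))
        = (n.choose a * n.choose b) * ((n - b) * (a + 1)) := by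
      calc n.choose a * n.choose (b + 1) * ((a + 1) * (b + 1))
          = n.choose a * (n.choose (b + 1) * (b + 1)) * (a + 1) := by ring
        _ = n.choose a * (n.choose b * (n - b)) * (a + 1) := by rw [h2]
        _ = (n.choose a * n.choose b) * ((n - b) * (a + 1)) := by ring
    have e2 : n.choose (a + 1) * n.choose b * ((a + 1) * (b + 1))
        = (n.choose a * n.choose b) * ((n - a) * (b + 1)) := by
      calc n.choose (a + 1) * n.choose b * ((a + 1) * (b + 1))
          = n.choose (a + 1) * (a + 1) * n.choose b * (b + 1) := by ring
        _ = n.choose a * (n - a) * n.choose b * (b + 1) := by rw [h1]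
        _ = (n.choose a * n.choose b) * ((n - a) * (b + 1)) := by ring
    rw [e1, e2]
    exact Nat.mul_le_mul_left _
      (Nat.mul_le_mul (Nat.sub_le_sub_left h n) (Nat.succ_le_succ h))
  exact Nat.le_of_mul_le_mul_right key (by positivity)

lemma cheby (u v : ℕ → ℕ) (h : ∀ t s, t ≤ s → v t * u s ≤ u t * v s) {K T : ℕ}
    (hKT : K ≤ T) :
    (∑ t ∈ range K, v t) * (∑ s ∈ range T, u s)
      ≤ (∑ t ∈ range K, u t) * (∑ s ∈ range T, v s) := by
  have hsplit : range T = range K ∪ Ico K T := by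
    rw [range_eq_Ico, range_eq_Ico, Finset.Ico_union_Ico_eq_Ico (Nat.zero_le K) hKT]
  have hdisj : Disjoint (range K) (Ico K T) := by
    rw [range_eq_Ico]
    exact Finset.Ico_disjoint_Ico_consecutive 0 K T
  rw [hsplit, sum_union hdisj, sum_union hdisj, mul_add, mul_add]
  have h1 : (∑ t ∈ range K, v t) * (∑ s ∈ Ico K T, u s)
      ≤ (∑ t ∈ range K, u t) * (∑ s ∈ Ico K T, v s) := by
    rw [Finset.sum_mul_sum, Finset.sum_mul_sum]
    apply Finset.sum_le_sum
    intro t ht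
    apply Finset.sum_le_sum
    intro s hs
    exact h t s (le_trans (Nat.lt_succ_iff.mp (Nat.lt_succ_of_lt (mem_range.mp ht)))
      (mem_Ico.mp hs).1)
  have h2 : (∑ t ∈ range K, v t) * (∑ s ∈ range K, u s)
      = (∑ t ∈ range K, u t) * (∑ s ∈ range K, v s) := by ring
  omega


-- PART 3 (to append inside namespace)
lemma hyp1 (p q ρ m : ℕ) {t s : ℕ} (hts : t ≤ s) :
    coeff p q ρ (m + 1) t * coeff p q ρ m s ≤ coeff p q ρ m t * coeff p q ρ (m + 1) s := by
  unfold coeff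
  by_cases h1 : m + 1 ≤ min p ρ + t ∧ min p ρ + t - (m + 1) ≤ p ∧ t ≤ q ∧
      (min p ρ + t - (m + 1)) + t ≤ ρ
  · by_cases h2 : m ≤ min p ρ + s ∧ min p ρ + s - m ≤ p ∧ s ≤ q ∧ (min p ρ + s - m) + s ≤ ρ
    · rw [if_pos h1, if_pos h2, if_pos (by omega : m ≤ min p ρ + t ∧ min p ρ + t - m ≤ p ∧
        t ≤ q ∧ (min p ρ + t - m) + t ≤ ρ), if_pos (by omega : m + 1 ≤ min p ρ + s ∧
        min p ρ + s - (m + 1) ≤ p ∧ s ≤ q ∧ (min p ρ + s - (m + 1)) + s ≤ ρ)]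
      set a := min p ρ + t - (m + 1) with ha
      set b := min p ρ + s - (m + 1) with hb
      have hat : min p ρ + t - m = a + 1 := by omega
      have hbs : min p ρ + s - m = b + 1 := by omega
      rw [hat, hbs]
      have hab : a ≤ b := by omega
      calc p.choose a * q.choose t * (p.choose (b + 1) * q.choose s)
          = (p.choose a * p.choose (b + 1)) * (q.choose t * q.choose s) := by ring
        _ ≤ (p.choose (a + 1) * p.choose b) * (q.choose t * q.choose s) :=
            Nat.mul_le_mul_right _ (choose_logconcave p a b hab)
        _ = p.choose (a + 1) * q.choose t * (p.choose b * q.choose s) := by ring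
    · rw [if_neg h2]
      simp
  · rw [if_neg h1]
    simp

def wseq (p q ρ m : ℕ) : ℕ → ℕ
  | 0 => 0
  | t + 1 => coeff p q ρ m t

lemma hyp2 (p q ρ m : ℕ) {t s : ℕ} (hts : t ≤ s) :
    wseq p q ρ m t * coeff p q ρ (m + 1) s ≤ coeff p q ρ (m + 1) t * wseq p q ρ m s := by
  match t, s with
  | 0, s => simp [wseq]
  | t' + 1, 0 => omega
  | t' + 1, s' + 1 =>
    simp only [wseq]
    have hts' : t' ≤ s' := by omega
    unfold coeff
    by_cases h1 : m ≤ min p ρ + t' ∧ min p ρ + t' - m ≤ p ∧ t' ≤ q ∧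
        (min p ρ + t' - m) + t' ≤ ρ
    · by_cases h2 : m + 1 ≤ min p ρ + (s' + 1) ∧ min p ρ + (s' + 1) - (m + 1) ≤ p ∧
          s' + 1 ≤ q ∧ (min p ρ + (s' + 1) - (m + 1)) + (s' + 1) ≤ ρ
      · rw [if_pos h1, if_pos h2, if_pos (by omega : m + 1 ≤ min p ρ + (t' + 1) ∧
          min p ρ + (t' + 1) - (m + 1) ≤ p ∧ t' + 1 ≤ q ∧
          (min p ρ + (t' + 1) - (m + 1)) + (t' + 1) ≤ ρ), if_pos (by omega :
          m ≤ min p ρ + s' ∧ min p ρ + s' - m ≤ p ∧ s' ≤ q ∧ (min p ρ + s' - m) + s' ≤ ρ)]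
        set a := min p ρ + t' - m with ha
        set b := min p ρ + s' - m with hb
        have e1 : min p ρ + (s' + 1) - (m + 1) = b := by omega
        have e2 : min p ρ + (t' + 1) - (m + 1) = a := by omega
        rw [e1, e2]
        calc p.choose a * q.choose t' * (p.choose b * q.choose (s' + 1))
            = (q.choose t' * q.choose (s' + 1)) * (p.choose a * p.choose b) := by ring
          _ ≤ (q.choose (t' + 1) * q.choose s') * (p.choose a * p.choose b) :=
              Nat.mul_le_mul_right _ (choose_logconcave q t' s' hts')
          _ = p.choose a * q.choose (t' + 1) * (p.choose b * q.choose s') := by ring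
      · rw [if_neg h2]
        simp
    · rw [if_neg h1]
      simp

lemma coeff_big_j (p q ρ m j : ℕ) (hj : q < j) : coeff p q ρ m j = 0 := by
  unfold coeff
  rw [if_neg (by omega)]

lemma G_q_stable (p q ρ m k : ℕ) (hk : q + 1 ≤ k) : G p q ρ m k = NN p q ρ m := by
  unfold NN G
  rw [← Finset.sum_range_add_sum_Ico _ hk]
  have : ∑ j ∈ Ico (q + 1) k, coeff p q ρ m j = 0 := by
    apply Finset.sum_eq_zero
    intro j hj
    exact coeff_big_j p q ρ m j (by have := (mem_Ico.mp hj).1; omega)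
  omega

lemma flowI (p q ρ m : ℕ) {k : ℕ} (hk : k ≤ q + 1) :
    G p q ρ (m + 1) k * NN p q ρ m ≤ G p q ρ m k * NN p q ρ (m + 1) := by
  unfold NN G
  exact cheby (coeff p q ρ m) (coeff p q ρ (m + 1)) (fun t s hts => hyp1 p q ρ m hts) hk

lemma flowII (p q ρ m : ℕ) {k : ℕ} (hk : k ≤ q + 1) :
    G p q ρ m k * NN p q ρ (m + 1) ≤ G p q ρ (m + 1) (k + 1) * NN p q ρ m := by
  have key := cheby (coeff p q ρ (m + 1)) (wseq p q ρ m)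
    (fun t s hts => hyp2 p q ρ m hts) (show k + 1 ≤ q + 2 by omega)
  have e1 : (∑ t ∈ range (k + 1), wseq p q ρ m t) = G p q ρ m k := by
    rw [Finset.sum_range_succ']
    simp [G, wseq]
  have e2 : (∑ t ∈ range (q + 2), wseq p q ρ m t) = NN p q ρ m := by
    rw [Finset.sum_range_succ']
    simp [NN, G, wseq]
  have e3 : (∑ s ∈ range (q + 2), coeff p q ρ (m + 1) s) = NN p q ρ (m + 1) :=
    G_q_stable p q ρ (m + 1) (q + 2) (by omega)
  have e4 : (∑ s ∈ range (k + 1), coeff p q ρ (m + 1) s) = G p q ρ (m + 1) (k + 1) := rfl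
  rw [e1, e2, e3, e4] at key
  exact key

lemma vanishA (p q ρ m j : ℕ) (hsrc : coeff p q ρ (m + 1) j ≠ 0)
    (htgt : coeff p q ρ m j = 0) :
    G p q ρ (m + 1) (j + 1) * NN p q ρ m = G p q ρ m j * NN p q ρ (m + 1) := by
  have hg1 : m + 1 ≤ min p ρ + j ∧ min p ρ + j - (m + 1) ≤ p ∧ j ≤ q ∧
      (min p ρ + j - (m + 1)) + j ≤ ρ := by
    by_contra h
    exact hsrc (by unfold coeff; rw [if_neg h])
  have hg2 : ¬(m ≤ min p ρ + j ∧ min p ρ + j - m ≤ p ∧ j ≤ q ∧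
      (min p ρ + j - m) + j ≤ ρ) := by
    intro h
    have hne : coeff p q ρ m j ≠ 0 := by
      unfold coeff
      rw [if_pos h]
      exact Nat.mul_ne_zero (Nat.choose_pos (by omega)).ne' (Nat.choose_pos (by omega)).ne'
    exact hne htgt
  have hcase : min p ρ + j - m > p ∨ (min p ρ + j - m) + j > ρ := by omega
  have h1 : ∀ t, j ≤ t → coeff p q ρ m t = 0 := by
    intro t ht
    unfold coeff
    rw [if_neg]
    omega
  have h2 : ∀ t, j + 1 ≤ t → coeff p q ρ (m + 1) t = 0 := by
    intro t ht
    unfold coeff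
    rw [if_neg]
    omega
  have e1 : NN p q ρ m = G p q ρ m j := by
    unfold NN G
    rw [← Finset.sum_range_add_sum_Ico _ (show j ≤ q + 1 by omega)]
    have : ∑ t ∈ Ico j (q + 1), coeff p q ρ m t = 0 :=
      Finset.sum_eq_zero fun t ht => h1 t (mem_Ico.mp ht).1
    omega
  have e2 : NN p q ρ (m + 1) = G p q ρ (m + 1) (j + 1) := by
    unfold NN G
    rw [← Finset.sum_range_add_sum_Ico _ (show j + 1 ≤ q + 1 by omega)]
    have : ∑ t ∈ Ico (j + 1) (q + 1), coeff p q ρ (m + 1) t = 0 :=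
      Finset.sum_eq_zero fun t ht => h2 t (mem_Ico.mp ht).1
    omega
  rw [e1.symm, e2.symm]
  ring

-- PART 4
lemma I1_disj_I2 {p q : ℕ} : ∀ a : ℕ, a ∈ Finset.Icc 1 p → a ∉ Finset.Icc (p+1) (p+q) := by
  intro a ha hb
  simp only [mem_Icc] at ha hb
  omega

lemma sdiff_union_I1 {p q : ℕ} (U Y : Finset ℕ) (hU : U ⊆ Finset.Icc 1 p)
    (hY : Y ⊆ Finset.Icc (p+1) (p+q)) :
    Finset.Icc 1 p \ (U ∪ Y) = Finset.Icc 1 p \ U ∧ (U ∪ Y) \ Finset.Icc 1 p = Y := by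
  constructor
  · ext a
    simp only [mem_sdiff, mem_union]
    constructor
    · rintro ⟨h1, h2⟩
      exact ⟨h1, fun h => h2 (Or.inl h)⟩
    · rintro ⟨h1, h2⟩
      refine ⟨h1, ?_⟩
      rintro (h | h)
      · exact h2 h
      · exact I1_disj_I2 a h1 (hY h)
  · ext a
    simp only [mem_sdiff, mem_union]
    constructor
    · rintro ⟨h1 | h1, h2⟩
      · exact absurd (hU h1) h2
      · exact h1
    · intro h
      exact ⟨Or.inr h, fun hc => I1_disj_I2 a hc (hY h)⟩

lemma card_profile (p q : ℕ) (i j : ℕ) (hi : i ≤ p) (hj : j ≤ q) :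
    (((Finset.Icc 1 (p + q)).powerset).filter
      (fun S => icoord p S = i ∧ jcoord p S = j)).card = p.choose i * q.choose j := by
  have hcard1 : (Finset.Icc 1 p).card = p := by simp [Nat.card_Icc]
  have hcard2 : (Finset.Icc (p+1) (p+q)).card = q := by simp [Nat.card_Icc]
  have key : (((Finset.Icc 1 (p + q)).powerset).filter
      (fun S => icoord p S = i ∧ jcoord p S = j)).card
      = ((Finset.Icc 1 p).powersetCard (p - i) ×ˢ
         (Finset.Icc (p+1) (p+q)).powersetCard j).card := by
    apply Finset.card_bij' (i := fun S _ => (S ∩ Finset.Icc 1 p, S \ Finset.Icc 1 p))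
      (j := fun P _ => P.1 ∪ P.2)
    · intro S hS
      rw [mem_filter, mem_powerset] at hS
      obtain ⟨hsub, hic, hjc⟩ := hS
      rw [Finset.mem_product, Finset.mem_powersetCard, Finset.mem_powersetCard]
      refine ⟨⟨Finset.inter_subset_right, ?_⟩, ⟨sdiff_subset_I2 hsub, hjc⟩⟩
      show (S ∩ Finset.Icc 1 p).card = p - i
      have h2 := Finset.card_inter_add_card_sdiff (Finset.Icc 1 p) S
      rw [Finset.inter_comm] at h2
      unfold icoord at hic
      omega
    · intro P hP
      rw [Finset.mem_product, Finset.mem_powersetCard, Finset.mem_powersetCard] at hP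
      obtain ⟨⟨hU, hUc⟩, hY, hYc⟩ := hP
      rw [mem_filter, mem_powerset]
      obtain ⟨e1, e2⟩ := sdiff_union_I1 P.1 P.2 hU hY
      refine ⟨?_, ?_, ?_⟩
      · apply Finset.union_subset
        · exact hU.trans (Finset.Icc_subset_Icc le_rfl (by omega))
        · exact hY.trans (Finset.Icc_subset_Icc (by omega) le_rfl)
      · unfold icoord
        rw [e1, Finset.card_sdiff_of_subset hU]
        omega
      · unfold jcoord
        rw [e2, hYc]
    · intro S hS
      show S ∩ Finset.Icc 1 p ∪ S \ Finset.Icc 1 p = S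
      ext a
      simp only [mem_union, mem_inter, mem_sdiff]
      tauto
    · intro P hP
      rw [Finset.mem_product, Finset.mem_powersetCard, Finset.mem_powersetCard] at hP
      obtain ⟨⟨hU, hUc⟩, hY, hYc⟩ := hP
      obtain ⟨e1, e2⟩ := sdiff_union_I1 P.1 P.2 hU hY
      have e3 : (P.1 ∪ P.2) ∩ Finset.Icc 1 p = P.1 := by
        ext a
        simp only [mem_inter, mem_union]
        constructor
        · rintro ⟨h1 | h1, h2⟩
          · exact h1
          · exact absurd h2 (fun hc => I1_disj_I2 a hc (hY h1))
        · intro h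
          exact ⟨Or.inl h, hU h⟩
      rw [e3]
      rw [e2]
  rw [key, Finset.card_product, Finset.card_powersetCard, Finset.card_powersetCard,
    hcard1, hcard2, Nat.choose_symm hi]

lemma card_layer (p q ρ m : ℕ) : (layer p q ρ m).card = NN p q ρ m := by
  rw [Finset.card_eq_sum_card_fiberwise (f := jcoord p) (t := range (q+1))
    (fun S hS => by
      rw [layer, mem_coe, mem_filter] at hS
      have := jcoord_le (mem_ball_iff.mp hS.1).1
      rw [mem_coe, mem_range]
      omega)]
  unfold NN G
  apply Finset.sum_congr rfl
  intro j hj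
  have hjq : j ≤ q := by rw [mem_range] at hj; omega
  by_cases hg : m ≤ min p ρ + j ∧ min p ρ + j - m ≤ p ∧ j ≤ q ∧ (min p ρ + j - m) + j ≤ ρ
  · have hset : (layer p q ρ m).filter (fun S => jcoord p S = j)
        = ((Finset.Icc 1 (p+q)).powerset).filter
            (fun S => icoord p S = (min p ρ + j - m) ∧ jcoord p S = j) := by
      ext S
      simp only [layer, mem_filter, mem_powerset]
      constructor
      · rintro ⟨⟨hball, hrank⟩, hjc⟩
        have h1 := rank_add hball
        exact ⟨(mem_ball_iff.mp hball).1, by omega, hjc⟩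
      · rintro ⟨hsub, hic, hjc⟩
        have hball : S ∈ ball p q ρ := mem_ball_iff.mpr ⟨hsub, by omega⟩
        have h1 := rank_add hball
        exact ⟨⟨hball, by omega⟩, hjc⟩
    rw [hset, card_profile p q _ j (by omega) hjq]
    unfold coeff
    rw [if_pos hg]
  · have hset : (layer p q ρ m).filter (fun S => jcoord p S = j) = ∅ := by
      rw [Finset.eq_empty_iff_forall_notMem]
      intro S hS
      rw [mem_filter, layer, mem_filter] at hS
      obtain ⟨⟨hball, hrank⟩, hjc⟩ := hS
      have h1 := rank_add hball
      have h2 := (mem_ball_iff.mp hball).2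
      have h3 := icoord_le (p := p) S
      exact hg ⟨by omega, by omega, hjq, by omega⟩
    rw [hset]
    unfold coeff
    rw [if_neg hg]
    rfl

lemma hammingLayerSize_eq (p q ρ m : ℕ) : hammingLayerSize p q ρ m = NN p q ρ m := by
  unfold hammingLayerSize NN G
  have h1 : ∑ j ∈ range (q+1), coeff p q ρ m j
      = ∑ j ∈ (range (q+1)).filter (fun j => m ≤ min p ρ + j ∧ min p ρ + j - m ≤ p ∧
          j ≤ q ∧ (min p ρ + j - m) + j ≤ ρ), p.choose (min p ρ + j - m) * q.choose j := by
    rw [Finset.sum_filter]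
    apply Finset.sum_congr rfl
    intro j _
    simp only [coeff]
  rw [h1]
  apply Finset.sum_bij' (i := fun ij _ => ij.2) (j := fun j _ => ((min p ρ + j - m, j) : ℕ × ℕ))
  · intro ij hij
    rw [mem_filter, Finset.mem_product, mem_range, mem_range] at hij
    obtain ⟨⟨hi1, hi2⟩, hsum, hrank⟩ := hij
    rw [mem_filter, mem_range]
    refine ⟨hi2, by omega, by omega, by omega, by omega⟩
  · intro j hj
    rw [mem_filter, mem_range] at hj
    obtain ⟨hjq, hg1, hg2, hg3, hg4⟩ := hj
    rw [mem_filter, Finset.mem_product, mem_range, mem_range]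
    exact ⟨⟨by omega, by omega⟩, by omega, by omega⟩
  · intro ij hij
    rw [mem_filter, Finset.mem_product, mem_range, mem_range] at hij
    obtain ⟨⟨hi1, hi2⟩, hsum, hrank⟩ := hij
    have : min p ρ + ij.2 - m = ij.1 := by omega
    rw [Prod.ext_iff]
    exact ⟨this, rfl⟩
  · intro j hj
    rfl
  · intro ij hij
    rw [mem_filter, Finset.mem_product, mem_range, mem_range] at hij
    obtain ⟨⟨hi1, hi2⟩, hsum, hrank⟩ := hij
    have : min p ρ + ij.2 - m = ij.1 := by omega
    rw [this]

-- PART 5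
lemma card_inter_I1 {p : ℕ} (S : Finset ℕ) : (S ∩ Finset.Icc 1 p).card + icoord p S = p := by
  have h2 := Finset.card_inter_add_card_sdiff (Finset.Icc 1 p) S
  rw [Finset.inter_comm] at h2
  have h3 : (Finset.Icc 1 p).card = p := by simp [Nat.card_Icc]
  unfold icoord
  omega

lemma exists_erase {p q ρ m : ℕ} {s t : Finset ℕ} (hs : s ∈ layer p q ρ (m+1))
    (ht : t ∈ layer p q ρ m) (hts : t ⊆ s) : ∃ x, x ∈ s ∧ x ∉ t ∧ t = s.erase x := by
  have h1 := rank_card (mem_filter.mp hs).1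
  have h2 := rank_card (mem_filter.mp ht).1
  rw [(mem_filter.mp hs).2] at h1
  rw [(mem_filter.mp ht).2] at h2
  have hcard : s.card = t.card + 1 := by omega
  have hsd : (s \ t).card = 1 := by
    rw [Finset.card_sdiff_of_subset hts]
    omega
  obtain ⟨x, hx⟩ := Finset.card_eq_one.mp hsd
  have hxst : x ∈ s ∧ x ∉ t := by
    have : x ∈ s \ t := by rw [hx]; exact mem_singleton_self x
    exact ⟨(mem_sdiff.mp this).1, (mem_sdiff.mp this).2⟩
  refine ⟨x, hxst.1, hxst.2, ?_⟩
  ext a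
  rw [Finset.mem_erase]
  constructor
  · intro ha
    refine ⟨fun hax => hxst.2 (hax ▸ ha), hts ha⟩
  · rintro ⟨hax, has⟩
    by_contra hat
    have : a ∈ s \ t := mem_sdiff.mpr ⟨has, hat⟩
    rw [hx, mem_singleton] at this
    exact hax this

lemma icoord_erase_of_I1 {p : ℕ} {s : Finset ℕ} {x : ℕ} (hx1 : x ∈ Finset.Icc 1 p)
    (hx2 : x ∈ s) : icoord p (s.erase x) = icoord p s + 1 := by
  unfold icoord
  have he : Finset.Icc 1 p \ s.erase x = insert x (Finset.Icc 1 p \ s) := by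
    ext a
    simp only [mem_sdiff, mem_erase, mem_insert, not_and]
    constructor
    · rintro ⟨h1, h2⟩
      by_cases hax : a = x
      · exact Or.inl hax
      · exact Or.inr ⟨h1, h2 hax⟩
    · rintro (rfl | ⟨h1, h2⟩)
      · exact ⟨hx1, fun h => absurd rfl h⟩
      · exact ⟨h1, fun _ h => h2 h⟩
  rw [he, Finset.card_insert_of_notMem (by simp [hx2])]

lemma jcoord_erase_of_I1 {p : ℕ} {s : Finset ℕ} {x : ℕ} (hx1 : x ∈ Finset.Icc 1 p) :
    jcoord p (s.erase x) = jcoord p s := by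
  unfold jcoord
  congr 1
  ext a
  simp only [mem_sdiff, mem_erase]
  constructor
  · rintro ⟨⟨h1, h2⟩, h3⟩
    exact ⟨h2, h3⟩
  · rintro ⟨h1, h2⟩
    exact ⟨⟨fun h => h2 (h ▸ hx1), h1⟩, h2⟩

lemma icoord_erase_of_nI1 {p : ℕ} {s : Finset ℕ} {x : ℕ} (hx1 : x ∉ Finset.Icc 1 p) :
    icoord p (s.erase x) = icoord p s := by
  unfold icoord
  congr 1
  ext a
  simp only [mem_sdiff, mem_erase, not_and]
  constructor
  · rintro ⟨h1, h2⟩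
    exact ⟨h1, fun h => by
      by_cases hax : a = x
      · exact hx1 (hax ▸ h1)
      · exact h2 hax h⟩
  · rintro ⟨h1, h2⟩
    exact ⟨h1, fun _ h => h2 h⟩

lemma jcoord_erase_of_nI1 {p : ℕ} {s : Finset ℕ} {x : ℕ} (hx1 : x ∉ Finset.Icc 1 p)
    (hx2 : x ∈ s) : jcoord p (s.erase x) + 1 = jcoord p s := by
  unfold jcoord
  have he : s.erase x \ Finset.Icc 1 p = (s \ Finset.Icc 1 p).erase x := by
    ext a
    simp only [mem_sdiff, mem_erase]
    tauto
  rw [he, Finset.card_erase_add_one (mem_sdiff.mpr ⟨hx2, hx1⟩)]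

lemma icoord_insert_of_I1 {p : ℕ} {t : Finset ℕ} {x : ℕ} (hx1 : x ∈ Finset.Icc 1 p)
    (hx2 : x ∉ t) : icoord p (insert x t) + 1 = icoord p t := by
  unfold icoord
  have he : Finset.Icc 1 p \ insert x t = (Finset.Icc 1 p \ t).erase x := by
    ext a
    simp only [mem_sdiff, mem_erase, mem_insert, not_or]
    tauto
  rw [he, Finset.card_erase_add_one (mem_sdiff.mpr ⟨hx1, hx2⟩)]

lemma jcoord_insert_of_I1 {p : ℕ} {t : Finset ℕ} {x : ℕ} (hx1 : x ∈ Finset.Icc 1 p) :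
    jcoord p (insert x t) = jcoord p t := by
  unfold jcoord
  congr 1
  ext a
  simp only [mem_sdiff, mem_insert]
  constructor
  · rintro ⟨rfl | h1, h2⟩
    · exact absurd hx1 h2
    · exact ⟨h1, h2⟩
  · rintro ⟨h1, h2⟩
    exact ⟨Or.inr h1, h2⟩

lemma icoord_insert_of_nI1 {p : ℕ} {t : Finset ℕ} {x : ℕ} (hx1 : x ∉ Finset.Icc 1 p) :
    icoord p (insert x t) = icoord p t := by
  unfold icoord
  congr 1
  ext a
  simp only [mem_sdiff, mem_insert, not_or]
  constructor
  · rintro ⟨h1, h2, h3⟩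
    exact ⟨h1, h3⟩
  · rintro ⟨h1, h2⟩
    exact ⟨h1, fun h => hx1 (h ▸ h1), h2⟩

lemma jcoord_insert_of_nI1 {p : ℕ} {t : Finset ℕ} {x : ℕ} (hx1 : x ∉ Finset.Icc 1 p)
    (hx2 : x ∉ t) : jcoord p (insert x t) = jcoord p t + 1 := by
  unfold jcoord
  have he : insert x t \ Finset.Icc 1 p = insert x (t \ Finset.Icc 1 p) := by
    ext a
    simp only [mem_sdiff, mem_insert]
    constructor
    · rintro ⟨rfl | h1, h2⟩
      · exact Or.inl rfl
      · exact Or.inr ⟨h1, h2⟩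
    · rintro (rfl | ⟨h1, h2⟩)
      · exact ⟨Or.inl rfl, hx1⟩
      · exact ⟨Or.inr h1, h2⟩
  rw [he, Finset.card_insert_of_notMem (by simp [hx2])]

lemma coverDown {p q ρ m : ℕ} {s : Finset ℕ} (hs : s ∈ layer p q ρ (m+1)) :
    (layer p q ρ m).filter (fun t => t ⊆ s)
      = (if icoord p s + 1 + jcoord p s ≤ ρ then
          (s ∩ Finset.Icc 1 p).image s.erase else ∅)
        ∪ (s \ Finset.Icc 1 p).image s.erase := by
  have hsball : s ∈ ball p q ρ := (mem_filter.mp hs).1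
  have hsrank : hammingRank p ρ s = m + 1 := (mem_filter.mp hs).2
  have hssub := (mem_ball_iff.mp hsball).1
  have hsρ := (mem_ball_iff.mp hsball).2
  have hradd := rank_add hsball
  ext t
  simp only [mem_filter, mem_union]
  constructor
  · rintro ⟨htl, hts⟩
    obtain ⟨x, hxs, hxt, rfl⟩ := exists_erase hs htl hts
    have htball : s.erase x ∈ ball p q ρ := (mem_filter.mp htl).1
    by_cases hxI : x ∈ Finset.Icc 1 p
    · left
      have hic := icoord_erase_of_I1 hxI hxs
      have hjc := jcoord_erase_of_I1 (s := s) hxI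
      have hval : icoord p s + 1 + jcoord p s ≤ ρ := by
        have h2 := (mem_ball_iff.mp htball).2
        omega
      rw [if_pos hval]
      exact mem_image.mpr ⟨x, mem_inter.mpr ⟨hxs, hxI⟩, rfl⟩
    · right
      exact mem_image.mpr ⟨x, mem_sdiff.mpr ⟨hxs, hxI⟩, rfl⟩
  · intro h
    have hmain : ∀ x ∈ s, (x ∈ Finset.Icc 1 p → icoord p s + 1 + jcoord p s ≤ ρ) →
        s.erase x ∈ layer p q ρ m ∧ s.erase x ⊆ s := by
      intro x hxs hval
      have hsub : s.erase x ⊆ s := Finset.erase_subset x s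
      by_cases hxI : x ∈ Finset.Icc 1 p
      · have hic := icoord_erase_of_I1 hxI hxs
        have hjc := jcoord_erase_of_I1 (s := s) hxI
        have hball : s.erase x ∈ ball p q ρ :=
          mem_ball_iff.mpr ⟨hsub.trans hssub, by have := hval hxI; omega⟩
        have hr := rank_add hball
        refine ⟨mem_filter.mpr ⟨hball, by omega⟩, hsub⟩
      · have hic := icoord_erase_of_nI1 (s := s) hxI
        have hjc := jcoord_erase_of_nI1 hxI hxs
        have hball : s.erase x ∈ ball p q ρ :=
          mem_ball_iff.mpr ⟨hsub.trans hssub, by omega⟩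
        have hr := rank_add hball
        refine ⟨mem_filter.mpr ⟨hball, by omega⟩, hsub⟩
    rcases h with h | h
    · by_cases hval : icoord p s + 1 + jcoord p s ≤ ρ
      · rw [if_pos hval] at h
        obtain ⟨x, hx, rfl⟩ := mem_image.mp h
        exact hmain x (mem_inter.mp hx).1 (fun _ => hval)
      · rw [if_neg hval] at h
        exact absurd h (Finset.notMem_empty _)
    · obtain ⟨x, hx, rfl⟩ := mem_image.mp h
      rw [mem_sdiff] at hx
      exact hmain x hx.1 (fun hc => absurd hc hx.2)

lemma coverUp {p q ρ m : ℕ} {t : Finset ℕ} (ht : t ∈ layer p q ρ m) :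
    (layer p q ρ (m+1)).filter (fun s => t ⊆ s)
      = (Finset.Icc 1 p \ t).image (fun x => insert x t)
        ∪ (if icoord p t + jcoord p t + 1 ≤ ρ then
            (Finset.Icc (p+1) (p+q) \ t).image (fun x => insert x t) else ∅) := by
  have htball : t ∈ ball p q ρ := (mem_filter.mp ht).1
  have htrank : hammingRank p ρ t = m := (mem_filter.mp ht).2
  have htsub := (mem_ball_iff.mp htball).1
  have htρ := (mem_ball_iff.mp htball).2
  have hradd := rank_add htball
  ext s
  simp only [mem_filter, mem_union]
  constructor
  · rintro ⟨hsl, hts⟩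
    obtain ⟨x, hxs, hxt, hte⟩ := exists_erase hsl ht hts
    have hse : s = insert x t := by rw [hte, Finset.insert_erase hxs]
    have hsball : s ∈ ball p q ρ := (mem_filter.mp hsl).1
    have hxpq : x ∈ Finset.Icc 1 (p+q) := (mem_ball_iff.mp hsball).1 hxs
    by_cases hxI : x ∈ Finset.Icc 1 p
    · left
      exact mem_image.mpr ⟨x, mem_sdiff.mpr ⟨hxI, hxt⟩, hse.symm⟩
    · right
      have hxI2 : x ∈ Finset.Icc (p+1) (p+q) := by
        simp only [mem_Icc] at hxpq hxI ⊢
        omega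
      have hic : icoord p s = icoord p t := hse ▸ icoord_insert_of_nI1 hxI
      have hjc : jcoord p s = jcoord p t + 1 := hse ▸ jcoord_insert_of_nI1 hxI hxt
      have hval : icoord p t + jcoord p t + 1 ≤ ρ := by
        have h2 := (mem_ball_iff.mp hsball).2
        omega
      rw [if_pos hval]
      exact mem_image.mpr ⟨x, mem_sdiff.mpr ⟨hxI2, hxt⟩, hse.symm⟩
  · intro h
    rcases h with h | h
    · obtain ⟨x, hx, rfl⟩ := mem_image.mp h
      rw [mem_sdiff] at hx
      have hic := icoord_insert_of_I1 hx.1 hx.2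
      have hjc := jcoord_insert_of_I1 (t := t) hx.1
      have hball : insert x t ∈ ball p q ρ := by
        refine mem_ball_iff.mpr ⟨Finset.insert_subset ?_ htsub, by omega⟩
        rw [mem_Icc] at hx ⊢
        omega
      have hr := rank_add hball
      exact ⟨mem_filter.mpr ⟨hball, by omega⟩, Finset.subset_insert x t⟩
    · by_cases hval : icoord p t + jcoord p t + 1 ≤ ρ
      · rw [if_pos hval] at h
        obtain ⟨x, hx, rfl⟩ := mem_image.mp h
        rw [mem_sdiff] at hx
        have hxI : x ∉ Finset.Icc 1 p := by
          have := hx.1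
          rw [mem_Icc] at this ⊢
          omega
        have hic := icoord_insert_of_nI1 (t := t) hxI
        have hjc := jcoord_insert_of_nI1 hxI hx.2
        have hball : insert x t ∈ ball p q ρ := by
          refine mem_ball_iff.mpr ⟨Finset.insert_subset ?_ htsub, by omega⟩
          have := hx.1
          rw [mem_Icc] at this ⊢
          omega
        have hr := rank_add hball
        exact ⟨mem_filter.mpr ⟨hball, by omega⟩, Finset.subset_insert x t⟩
      · rw [if_neg hval] at h
        exact absurd h (Finset.notMem_empty _)

lemma NN_pos_below {p q ρ m : ℕ} {s : Finset ℕ} (hs : s ∈ layer p q ρ (m+1)) :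
    NN p q ρ m ≠ 0 := by
  suffices hne : (layer p q ρ m).Nonempty by
    rw [← card_layer]
    have := hne.card_pos
    omega
  have hsball : s ∈ ball p q ρ := (mem_filter.mp hs).1
  have hradd := rank_add hsball
  have hrank : hammingRank p ρ s = m + 1 := (mem_filter.mp hs).2
  have hsρ := (mem_ball_iff.mp hsball).2
  have hd := coverDown hs
  by_cases hj : 1 ≤ jcoord p s
  · obtain ⟨y, hy⟩ := Finset.card_pos.mp (show 0 < (s \ Finset.Icc 1 p).card by
      unfold jcoord at hj; omega)
    have : s.erase y ∈ (layer p q ρ m).filter (fun t => t ⊆ s) := by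
      rw [hd]
      exact mem_union_right _ (mem_image.mpr ⟨y, hy, rfl⟩)
    exact ⟨s.erase y, (mem_filter.mp this).1⟩
  · have hjz : jcoord p s = 0 := by omega
    have hival : icoord p s + 1 ≤ min p ρ := by omega
    have hcs := card_inter_I1 (p := p) s
    obtain ⟨x, hx⟩ := Finset.card_pos.mp (show 0 < (s ∩ Finset.Icc 1 p).card by
      have : icoord p s < p := by omega
      omega)
    have : s.erase x ∈ (layer p q ρ m).filter (fun t => t ⊆ s) := by
      rw [hd, if_pos (by omega)]
      exact mem_union_left _ (mem_image.mpr ⟨x, hx, rfl⟩)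
    exact ⟨s.erase x, (mem_filter.mp this).1⟩

-- PART 6
lemma sdiff_erase_self' {s : Finset ℕ} {x : ℕ} (hx : x ∈ s) : s \ s.erase x = {x} := by
  ext a
  simp only [mem_sdiff, mem_erase, mem_singleton, not_and]
  constructor
  · rintro ⟨h1, h2⟩
    by_contra hax
    exact (h2 hax) h1
  · rintro rfl
    exact ⟨hx, fun h _ => absurd rfl h⟩

lemma insert_sdiff_self' {t : Finset ℕ} {x : ℕ} (hx : x ∉ t) : insert x t \ t = {x} := by
  ext a
  simp only [mem_sdiff, mem_insert, mem_singleton]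
  constructor
  · rintro ⟨rfl | h1, h2⟩
    · rfl
    · exact absurd h1 h2
  · rintro rfl
    exact ⟨Or.inl rfl, hx⟩

noncomputable def w (p q ρ m : ℕ) (s t : Finset ℕ) : ℝ :=
  if s \ t ⊆ Finset.Icc 1 p then
    ((G p q ρ (m+1) (jcoord p s + 1) * NN p q ρ m
        - G p q ρ m (jcoord p s) * NN p q ρ (m+1) : ℕ) : ℝ)
      / (((p - icoord p s) * coeff p q ρ (m+1) (jcoord p s)
        * NN p q ρ (m+1) * NN p q ρ m : ℕ) : ℝ)
  else
    ((G p q ρ m (jcoord p s) * NN p q ρ (m+1)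
        - G p q ρ (m+1) (jcoord p s) * NN p q ρ m : ℕ) : ℝ)
      / (((jcoord p s) * coeff p q ρ (m+1) (jcoord p s)
        * NN p q ρ (m+1) * NN p q ρ m : ℕ) : ℝ)

lemma w_nonneg (p q ρ m : ℕ) (s t : Finset ℕ) : 0 ≤ w p q ρ m s t := by
  unfold w
  split <;> positivity

lemma w_erase_I1 {p q ρ m : ℕ} {s : Finset ℕ} {x : ℕ} (hx1 : x ∈ s) (hx2 : x ∈ Finset.Icc 1 p) :
    w p q ρ m s (s.erase x)
      = ((G p q ρ (m+1) (jcoord p s + 1) * NN p q ρ m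
          - G p q ρ m (jcoord p s) * NN p q ρ (m+1) : ℕ) : ℝ)
        / (((p - icoord p s) * coeff p q ρ (m+1) (jcoord p s)
          * NN p q ρ (m+1) * NN p q ρ m : ℕ) : ℝ) := by
  unfold w
  rw [if_pos (by rw [sdiff_erase_self' hx1, singleton_subset_iff]; exact hx2)]

lemma w_erase_nI1 {p q ρ m : ℕ} {s : Finset ℕ} {x : ℕ} (hx1 : x ∈ s)
    (hx2 : x ∉ Finset.Icc 1 p) :
    w p q ρ m s (s.erase x)
      = ((G p q ρ m (jcoord p s) * NN p q ρ (m+1)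
          - G p q ρ (m+1) (jcoord p s) * NN p q ρ m : ℕ) : ℝ)
        / (((jcoord p s) * coeff p q ρ (m+1) (jcoord p s)
          * NN p q ρ (m+1) * NN p q ρ m : ℕ) : ℝ) := by
  unfold w
  rw [if_neg (by rw [sdiff_erase_self' hx1, singleton_subset_iff]; exact hx2)]

lemma cancel2 (k D2 : ℕ) (x : ℝ) (hk : k ≠ 0) :
    (k : ℝ) * (x / ((k * D2 : ℕ) : ℝ)) = x / ((D2 : ℕ) : ℝ) := by
  push_cast
  rw [mul_div_assoc', mul_div_mul_left _ _ (by exact_mod_cast hk : (k:ℝ) ≠ 0)]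

lemma final_div (a b : ℕ) (ha : a ≠ 0) : ((a:ℕ):ℝ) / (((a * b : ℕ)):ℝ) = 1 / ((b:ℕ):ℝ) := by
  rcases Nat.eq_zero_or_pos b with hb | hb
  · subst hb; simp
  · push_cast
    rw [div_mul_eq_div_div]
    rw [div_self (by exact_mod_cast ha : (a:ℝ) ≠ 0)]

lemma G_succ (p q ρ m k : ℕ) : G p q ρ m (k+1) = G p q ρ m k + coeff p q ρ m k :=
  Finset.sum_range_succ _ _

lemma NN_pos_self {p q ρ k : ℕ} {S : Finset ℕ} (hS : S ∈ layer p q ρ k) :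
    NN p q ρ k ≠ 0 := by
  rw [← card_layer]
  exact Finset.card_ne_zero_of_mem hS

lemma out_sum {p q ρ m : ℕ} {s : Finset ℕ} (hs : s ∈ layer p q ρ (m+1)) :
    ∑ t ∈ (layer p q ρ m).filter (fun t => t ⊆ s), w p q ρ m s t
      = 1 / (NN p q ρ (m+1) : ℝ) := by
  have hsball := (mem_filter.mp hs).1
  have hsrank : hammingRank p ρ s = m + 1 := (mem_filter.mp hs).2
  have hssub := (mem_ball_iff.mp hsball).1
  have hsρ := (mem_ball_iff.mp hsball).2
  have hradd := rank_add hsball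
  rw [hsrank] at hradd
  have hip : icoord p s ≤ p := icoord_le s
  have hjq : jcoord p s ≤ q := jcoord_le hssub
  have hNm : NN p q ρ m ≠ 0 := NN_pos_below hs
  have hNm1 : NN p q ρ (m+1) ≠ 0 := NN_pos_self hs
  have hidx : min p ρ + jcoord p s - (m+1) = icoord p s := by omega
  have hc : coeff p q ρ (m+1) (jcoord p s) = p.choose (icoord p s) * q.choose (jcoord p s) := by
    unfold coeff
    rw [if_pos ⟨by omega, by omega, hjq, by omega⟩, hidx]
  have hcne : coeff p q ρ (m+1) (jcoord p s) ≠ 0 := by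
    rw [hc]
    exact Nat.mul_ne_zero (Nat.choose_pos hip).ne' (Nat.choose_pos hjq).ne'
  -- abbreviations
  set c := coeff p q ρ (m+1) (jcoord p s) with hcdef
  set N := NN p q ρ m with hN
  set N' := NN p q ρ (m+1) with hN'
  set AN : ℕ := G p q ρ (m+1) (jcoord p s + 1) * N - G p q ρ m (jcoord p s) * N' with hAN
  set BN : ℕ := G p q ρ m (jcoord p s) * N' - G p q ρ (m+1) (jcoord p s) * N with hBN
  -- key flow facts
  have hflowII : G p q ρ m (jcoord p s) * N' ≤ G p q ρ (m+1) (jcoord p s + 1) * N :=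
    flowII p q ρ m (by omega)
  have hflowI : G p q ρ (m+1) (jcoord p s) * N ≤ G p q ρ m (jcoord p s) * N' :=
    flowI p q ρ m (by omega)
  have hGsucc : G p q ρ (m+1) (jcoord p s + 1) * N
      = G p q ρ (m+1) (jcoord p s) * N + c * N := by
    rw [G_succ]; ring
  have hABsum : AN + BN = c * N := by omega
  -- vanishing of AN when the X-target class is invalid
  have hvanish : (icoord p s = p ∨ ¬ (icoord p s + 1 + jcoord p s ≤ ρ)) → AN = 0 := by
    intro hcase
    have htgt : coeff p q ρ m (jcoord p s) = 0 := by
      unfold coeff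
      rw [if_neg (by omega)]
    have hvan := vanishA p q ρ m (jcoord p s) hcne htgt
    rw [← hN, ← hN'] at hvan
    omega
  -- disjointness of the two parts
  have hdisj : Disjoint
      (if icoord p s + 1 + jcoord p s ≤ ρ then
        (s ∩ Finset.Icc 1 p).image s.erase else ∅)
      ((s \ Finset.Icc 1 p).image s.erase) := by
    split
    · rw [Finset.disjoint_left]
      intro t ht1 ht2
      obtain ⟨x, hx, hex⟩ := mem_image.mp ht1
      obtain ⟨y, hy, hey⟩ := mem_image.mp ht2
      rw [mem_inter] at hx
      rw [mem_sdiff] at hy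
      have hxy : x = y := Finset.erase_injOn s (Finset.mem_coe.mpr hx.1)
        (Finset.mem_coe.mpr hy.1) (hex.trans hey.symm)
      exact hy.2 (hxy ▸ hx.2)
    · exact Finset.disjoint_empty_left _
  rw [coverDown hs, Finset.sum_union hdisj]
  -- Y part
  have hcardY : (s \ Finset.Icc 1 p).card = jcoord p s := rfl
  have hinjY : ∀ x ∈ s \ Finset.Icc 1 p, ∀ y ∈ s \ Finset.Icc 1 p,
      s.erase x = s.erase y → x = y := fun x hx y hy h =>
    Finset.erase_injOn s (Finset.mem_coe.mpr (mem_sdiff.mp hx).1)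
      (Finset.mem_coe.mpr (mem_sdiff.mp hy).1) h
  have hsumY : ∑ t ∈ (s \ Finset.Icc 1 p).image s.erase, w p q ρ m s t
      = (BN : ℝ) / ((c * N' * N : ℕ) : ℝ) := by
    rw [Finset.sum_image hinjY]
    have hconst : ∀ x ∈ s \ Finset.Icc 1 p, w p q ρ m s (s.erase x)
        = (BN : ℝ) / ((jcoord p s * (c * N' * N) : ℕ) : ℝ) := by
      intro x hx
      rw [mem_sdiff] at hx
      rw [w_erase_nI1 hx.1 hx.2]
      congr 1
      congr 1
      ring
    rw [Finset.sum_congr rfl hconst, Finset.sum_const, hcardY, nsmul_eq_mul]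
    rcases Nat.eq_zero_or_pos (jcoord p s) with hj0 | hj0
    · have hBN0 : BN = 0 := by
        have h00 : G p q ρ m (jcoord p s) = 0 := by rw [hj0]; rfl
        have h01 : G p q ρ m (jcoord p s) * N' = 0 := by rw [h00, Nat.zero_mul]
        omega
      rw [hj0, hBN0]
      simp
    · exact cancel2 _ _ _ (by omega)
  -- X part
  have hsumX : ∑ t ∈ (if icoord p s + 1 + jcoord p s ≤ ρ then
        (s ∩ Finset.Icc 1 p).image s.erase else ∅), w p q ρ m s t
      = (AN : ℝ) / ((c * N' * N : ℕ) : ℝ) := by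
    by_cases hval : icoord p s + 1 + jcoord p s ≤ ρ
    · rw [if_pos hval]
      have hinjX : ∀ x ∈ s ∩ Finset.Icc 1 p, ∀ y ∈ s ∩ Finset.Icc 1 p,
          s.erase x = s.erase y → x = y := fun x hx y hy h =>
        Finset.erase_injOn s (mem_coe.mpr (mem_inter.mp hx).1)
          (mem_coe.mpr (mem_inter.mp hy).1) h
      rw [Finset.sum_image hinjX]
      have hconst : ∀ x ∈ s ∩ Finset.Icc 1 p, w p q ρ m s (s.erase x)
          = (AN : ℝ) / (((p - icoord p s) * (c * N' * N) : ℕ) : ℝ) := by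
        intro x hx
        rw [mem_inter] at hx
        rw [w_erase_I1 hx.1 hx.2]
        congr 1
        congr 1
        ring
      have hcardX : (s ∩ Finset.Icc 1 p).card = p - icoord p s := by
        have := card_inter_I1 (p := p) s
        omega
      rw [Finset.sum_congr rfl hconst, Finset.sum_const, hcardX, nsmul_eq_mul]
      rcases Nat.eq_zero_or_pos (p - icoord p s) with hp0 | hp0
      · have hAN0 : AN = 0 := hvanish (Or.inl (by omega))
        rw [hp0, hAN0]
        simp
      · exact cancel2 _ _ _ (by omega)
    · rw [if_neg hval]
      have hAN0 : AN = 0 := hvanish (Or.inr hval)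
      rw [Finset.sum_empty, hAN0]
      simp
  rw [hsumX, hsumY, ← add_div]
  rw [show (AN : ℝ) + (BN : ℝ) = ((AN + BN : ℕ) : ℝ) by push_cast; ring, hABsum]
  have : c * N' * N = (c * N) * N' := by ring
  rw [this, final_div _ _ (by positivity)]

-- PART 7 : in_sum
lemma mem_I2_not_I1 {p q y : ℕ} (hy : y ∈ Finset.Icc (p+1) (p+q)) : y ∉ Finset.Icc 1 p :=
  fun hc => I1_disj_I2 y hc hy

lemma card_I2_sdiff {p q ρ : ℕ} {t : Finset ℕ} (htsub : t ⊆ Finset.Icc 1 (p+q)) :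
    (Finset.Icc (p+1) (p+q) \ t).card = q - jcoord p t := by
  have h1 := Finset.card_inter_add_card_sdiff (Finset.Icc (p+1) (p+q)) t
  have h2 : Finset.Icc (p+1) (p+q) ∩ t = t \ Finset.Icc 1 p := by
    ext a
    simp only [mem_inter, mem_sdiff]
    constructor
    · rintro ⟨h3, h4⟩
      exact ⟨h4, mem_I2_not_I1 h3⟩
    · rintro ⟨h3, h4⟩
      refine ⟨?_, h3⟩
      have h5 := htsub h3
      rw [mem_Icc] at h4 h5 ⊢
      · constructor <;> omega
  have h3 : (Finset.Icc (p+1) (p+q)).card = q := by simp [Nat.card_Icc]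
  rw [h2] at h1
  unfold jcoord
  omega

lemma in_sum {p q ρ m : ℕ} {t : Finset ℕ} (ht : t ∈ layer p q ρ m) :
    ∑ s ∈ (layer p q ρ (m+1)).filter (fun s => t ⊆ s), w p q ρ m s t
      ≤ 1 / (NN p q ρ m : ℝ) := by
  have htball := (mem_filter.mp ht).1
  have htrank : hammingRank p ρ t = m := (mem_filter.mp ht).2
  have htsub := (mem_ball_iff.mp htball).1
  have htρ := (mem_ball_iff.mp htball).2
  have hradd := rank_add htball
  rw [htrank] at hradd
  have hip : icoord p t ≤ p := icoord_le t
  have hjq : jcoord p t ≤ q := jcoord_le htsub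
  have hNm : NN p q ρ m ≠ 0 := NN_pos_self ht
  by_cases hNm1 : NN p q ρ (m+1) = 0
  · have hempty : layer p q ρ (m+1) = ∅ := by
      have := card_layer p q ρ (m+1)
      rw [hNm1] at this
      exact Finset.card_eq_zero.mp this
    rw [hempty, Finset.filter_empty, Finset.sum_empty]
    positivity
  have hidx : min p ρ + jcoord p t - m = icoord p t := by omega
  have hc : coeff p q ρ m (jcoord p t) = p.choose (icoord p t) * q.choose (jcoord p t) := by
    unfold coeff
    rw [if_pos ⟨by omega, by omega, hjq, by omega⟩, hidx]
  have hcne : coeff p q ρ m (jcoord p t) ≠ 0 := by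
    rw [hc]
    exact Nat.mul_ne_zero (Nat.choose_pos hip).ne' (Nat.choose_pos hjq).ne'
  have hflowII : G p q ρ m (jcoord p t) * NN p q ρ (m+1)
      ≤ G p q ρ (m+1) (jcoord p t + 1) * NN p q ρ m := flowII p q ρ m (by omega)
  have hflowI : G p q ρ (m+1) (jcoord p t + 1) * NN p q ρ m
      ≤ G p q ρ m (jcoord p t + 1) * NN p q ρ (m+1) := flowI p q ρ m (by omega)
  have hGsucc : G p q ρ m (jcoord p t + 1) * NN p q ρ (m+1)
      = G p q ρ m (jcoord p t) * NN p q ρ (m+1)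
        + coeff p q ρ m (jcoord p t) * NN p q ρ (m+1) := by
    rw [G_succ]; ring
  -- disjointness
  have hdisj : Disjoint ((Finset.Icc 1 p \ t).image (fun x => insert x t))
      (if icoord p t + jcoord p t + 1 ≤ ρ then
        (Finset.Icc (p+1) (p+q) \ t).image (fun x => insert x t) else ∅) := by
    split
    · rw [Finset.disjoint_left]
      intro s hs1 hs2
      obtain ⟨x, hx, hex⟩ := mem_image.mp hs1
      obtain ⟨y, hy, hey⟩ := mem_image.mp hs2
      rw [mem_sdiff] at hx hy
      have heq : insert x t = insert y t := hex.trans hey.symm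
      have hxy : x = y := by
        have hx1 : x ∈ insert y t := heq ▸ Finset.mem_insert_self x t
        rcases Finset.mem_insert.mp hx1 with h | h
        · exact h
        · exact absurd h hx.2
      exact (mem_I2_not_I1 hy.1) (hxy ▸ hx.1)
    · exact Finset.disjoint_empty_right _
  rw [coverUp ht, Finset.sum_union hdisj]
  -- X part
  have hsumX : ∑ s ∈ (Finset.Icc 1 p \ t).image (fun x => insert x t), w p q ρ m s t
      ≤ ((G p q ρ (m+1) (jcoord p t + 1) * NN p q ρ m
          - G p q ρ m (jcoord p t) * NN p q ρ (m+1) : ℕ) : ℝ)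
        / ((coeff p q ρ m (jcoord p t) * NN p q ρ (m+1) * NN p q ρ m : ℕ) : ℝ) := by
    have hinjX : ∀ x ∈ Finset.Icc 1 p \ t, ∀ y ∈ Finset.Icc 1 p \ t,
        insert x t = insert y t → x = y := by
      intro x hx y hy heq
      have hx1 : x ∈ insert y t := heq ▸ Finset.mem_insert_self x t
      rcases Finset.mem_insert.mp hx1 with h | h
      · exact h
      · exact absurd h (mem_sdiff.mp hx).2
    rw [Finset.sum_image hinjX]
    rcases Nat.eq_zero_or_pos (icoord p t) with hi0 | hi0
    · have hemp : Finset.Icc 1 p \ t = ∅ := Finset.card_eq_zero.mp hi0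
      rw [hemp, Finset.sum_empty]
      positivity
    · obtain ⟨k, hk⟩ : ∃ k, icoord p t = k + 1 := ⟨icoord p t - 1, by omega⟩
      have hguard2 : m + 1 ≤ min p ρ + jcoord p t := by omega
      have hidx2 : min p ρ + jcoord p t - (m+1) = k := by omega
      have hc2 : coeff p q ρ (m+1) (jcoord p t) = p.choose k * q.choose (jcoord p t) := by
        unfold coeff
        rw [if_pos ⟨hguard2, by omega, hjq, by omega⟩, hidx2]
      have hconst : ∀ x ∈ Finset.Icc 1 p \ t, w p q ρ m (insert x t) t
          = ((G p q ρ (m+1) (jcoord p t + 1) * NN p q ρ m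
              - G p q ρ m (jcoord p t) * NN p q ρ (m+1) : ℕ) : ℝ)
            / (((icoord p t)
              * (coeff p q ρ m (jcoord p t) * NN p q ρ (m+1) * NN p q ρ m) : ℕ) : ℝ) := by
        intro x hx
        rw [mem_sdiff] at hx
        unfold w
        rw [if_pos (by rw [insert_sdiff_self' hx.2, singleton_subset_iff]; exact hx.1)]
        have hic := icoord_insert_of_I1 hx.1 hx.2
        have hjc := jcoord_insert_of_I1 (t := t) hx.1
        rw [hjc, show icoord p (insert x t) = k by omega]
        congr 1
        have hkey : (icoord p t)
            * (coeff p q ρ m (jcoord p t) * NN p q ρ (m+1) * NN p q ρ m)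
            = (p - k) * coeff p q ρ (m+1) (jcoord p t) * NN p q ρ (m+1) * NN p q ρ m := by
          rw [hc, hc2, hk]
          have hcs := Nat.choose_succ_right_eq p k
          calc (k+1) * (p.choose (k+1) * q.choose (jcoord p t) * NN p q ρ (m+1) * NN p q ρ m)
              = (p.choose (k+1) * (k+1))
                * (q.choose (jcoord p t) * NN p q ρ (m+1) * NN p q ρ m) := by ring
            _ = (p.choose k * (p - k))
                * (q.choose (jcoord p t) * NN p q ρ (m+1) * NN p q ρ m) := by rw [hcs]
            _ = (p - k) * (p.choose k * q.choose (jcoord p t)) * NN p q ρ (m+1)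
                * NN p q ρ m := by ring
        rw [hkey]
      rw [Finset.sum_congr rfl hconst, Finset.sum_const]
      have hcard : (Finset.Icc 1 p \ t).card = icoord p t := rfl
      rw [hcard, nsmul_eq_mul]
      rw [cancel2 _ _ _ (by omega)]
  -- Y part
  have hsumY : ∑ s ∈ (if icoord p t + jcoord p t + 1 ≤ ρ then
        (Finset.Icc (p+1) (p+q) \ t).image (fun x => insert x t) else ∅), w p q ρ m s t
      ≤ ((G p q ρ m (jcoord p t + 1) * NN p q ρ (m+1)
          - G p q ρ (m+1) (jcoord p t + 1) * NN p q ρ m : ℕ) : ℝ)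
        / ((coeff p q ρ m (jcoord p t) * NN p q ρ (m+1) * NN p q ρ m : ℕ) : ℝ) := by
    by_cases hval : icoord p t + jcoord p t + 1 ≤ ρ
    · rw [if_pos hval]
      have hinjY : ∀ x ∈ Finset.Icc (p+1) (p+q) \ t, ∀ y ∈ Finset.Icc (p+1) (p+q) \ t,
          insert x t = insert y t → x = y := by
        intro x hx y hy heq
        have hx1 : x ∈ insert y t := heq ▸ Finset.mem_insert_self x t
        rcases Finset.mem_insert.mp hx1 with h | h
        · exact h
        · exact absurd h (mem_sdiff.mp hx).2
      rw [Finset.sum_image hinjY]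
      rcases Nat.eq_zero_or_pos (q - jcoord p t) with hq0 | hq0
      · have hemp : Finset.Icc (p+1) (p+q) \ t = ∅ := by
          apply Finset.card_eq_zero.mp
          rw [card_I2_sdiff (ρ := ρ) htsub, hq0]
        rw [hemp, Finset.sum_empty]
        positivity
      · have hjq2 : jcoord p t + 1 ≤ q := by omega
        have hidx3 : min p ρ + (jcoord p t + 1) - (m+1) = icoord p t := by omega
        have hc3 : coeff p q ρ (m+1) (jcoord p t + 1)
            = p.choose (icoord p t) * q.choose (jcoord p t + 1) := by
          unfold coeff
          rw [if_pos ⟨by omega, by omega, hjq2, by omega⟩, hidx3]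
        have hconst : ∀ x ∈ Finset.Icc (p+1) (p+q) \ t, w p q ρ m (insert x t) t
            = ((G p q ρ m (jcoord p t + 1) * NN p q ρ (m+1)
                - G p q ρ (m+1) (jcoord p t + 1) * NN p q ρ m : ℕ) : ℝ)
              / (((q - jcoord p t)
                * (coeff p q ρ m (jcoord p t) * NN p q ρ (m+1) * NN p q ρ m) : ℕ) : ℝ) := by
          intro x hx
          rw [mem_sdiff] at hx
          have hxn1 : x ∉ Finset.Icc 1 p := mem_I2_not_I1 hx.1
          unfold w
          rw [if_neg (by rw [insert_sdiff_self' hx.2, singleton_subset_iff]; exact hxn1)]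
          have hjc := jcoord_insert_of_nI1 hxn1 hx.2
          rw [hjc]
          congr 1
          have hkey : (q - jcoord p t)
              * (coeff p q ρ m (jcoord p t) * NN p q ρ (m+1) * NN p q ρ m)
              = (jcoord p t + 1) * coeff p q ρ (m+1) (jcoord p t + 1) * NN p q ρ (m+1)
                * NN p q ρ m := by
            rw [hc, hc3]
            have hcs := Nat.choose_succ_right_eq q (jcoord p t)
            calc (q - jcoord p t) * (p.choose (icoord p t) * q.choose (jcoord p t)
                  * NN p q ρ (m+1) * NN p q ρ m)
                = (q.choose (jcoord p t) * (q - jcoord p t))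
                  * (p.choose (icoord p t) * NN p q ρ (m+1) * NN p q ρ m) := by ring
              _ = (q.choose (jcoord p t + 1) * (jcoord p t + 1))
                  * (p.choose (icoord p t) * NN p q ρ (m+1) * NN p q ρ m) := by rw [hcs]
              _ = (jcoord p t + 1) * (p.choose (icoord p t) * q.choose (jcoord p t + 1))
                  * NN p q ρ (m+1) * NN p q ρ m := by ring
          rw [hkey]
        rw [Finset.sum_congr rfl hconst, Finset.sum_const]
        rw [card_I2_sdiff (ρ := ρ) htsub, nsmul_eq_mul]
        rw [cancel2 _ _ _ (by omega)]
    · rw [if_neg hval, Finset.sum_empty]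
      positivity
  refine le_trans (add_le_add hsumX hsumY) ?_
  rw [← add_div]
  have hcast : ((G p q ρ (m+1) (jcoord p t + 1) * NN p q ρ m
      - G p q ρ m (jcoord p t) * NN p q ρ (m+1) : ℕ) : ℝ)
      + ((G p q ρ m (jcoord p t + 1) * NN p q ρ (m+1)
      - G p q ρ (m+1) (jcoord p t + 1) * NN p q ρ m : ℕ) : ℝ)
      = ((coeff p q ρ m (jcoord p t) * NN p q ρ (m+1) : ℕ) : ℝ) := by
    rw [← Nat.cast_add]
    congr 1
    omega
  rw [hcast]
  have hassoc : coeff p q ρ m (jcoord p t) * NN p q ρ (m+1) * NN p q ρ m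
      = (coeff p q ρ m (jcoord p t) * NN p q ρ (m+1)) * NN p q ρ m := by ring
  rw [hassoc, final_div _ _ (by positivity)]

-- PART 8 : normalized matching and LYM
lemma NM {p q ρ m : ℕ} (B : Finset (Finset ℕ)) (hB : B ⊆ layer p q ρ (m+1)) :
    (B.card : ℝ) / (NN p q ρ (m+1) : ℝ)
      ≤ (((layer p q ρ m).filter (fun t => ∃ s ∈ B, t ⊆ s)).card : ℝ)
        / (NN p q ρ m : ℝ) := by
  calc (B.card : ℝ) / (NN p q ρ (m+1) : ℝ)
      = ∑ _s ∈ B, (1 / (NN p q ρ (m+1) : ℝ)) := by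
        rw [Finset.sum_const, nsmul_eq_mul, mul_one_div]
    _ = ∑ s ∈ B, ∑ t ∈ (layer p q ρ m).filter (fun t => t ⊆ s), w p q ρ m s t :=
        Finset.sum_congr rfl (fun s hs => (out_sum (hB hs)).symm)
    _ = ∑ s ∈ B, ∑ t ∈ layer p q ρ m, ite (t ⊆ s) (w p q ρ m s t) 0 :=
        Finset.sum_congr rfl (fun s _ => Finset.sum_filter _ _)
    _ = ∑ t ∈ layer p q ρ m, ∑ s ∈ B, ite (t ⊆ s) (w p q ρ m s t) 0 := Finset.sum_comm
    _ = ∑ t ∈ (layer p q ρ m).filter (fun t => ∃ s ∈ B, t ⊆ s),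
          ∑ s ∈ B, ite (t ⊆ s) (w p q ρ m s t) 0 := by
        refine (Finset.sum_subset (Finset.filter_subset _ _) ?_).symm
        intro t htl htn
        refine Finset.sum_eq_zero fun s hs => ?_
        rw [if_neg (fun hts => htn (Finset.mem_filter.mpr ⟨htl, ⟨s, hs, hts⟩⟩))]
    _ ≤ ∑ _t ∈ (layer p q ρ m).filter (fun t => ∃ s ∈ B, t ⊆ s),
          (1 / (NN p q ρ m : ℝ)) := by
        refine Finset.sum_le_sum fun t htm => ?_
        have ht : t ∈ layer p q ρ m := (Finset.mem_filter.mp htm).1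
        calc ∑ s ∈ B, ite (t ⊆ s) (w p q ρ m s t) 0
            ≤ ∑ s ∈ layer p q ρ (m+1), ite (t ⊆ s) (w p q ρ m s t) 0 := by
              refine Finset.sum_le_sum_of_subset_of_nonneg hB (fun s _ _ => ?_)
              split
              · exact w_nonneg p q ρ m s t
              · exact le_refl 0
          _ = ∑ s ∈ (layer p q ρ (m+1)).filter (fun s => t ⊆ s), w p q ρ m s t :=
              (Finset.sum_filter _ _).symm
          _ ≤ 1 / (NN p q ρ m : ℝ) := in_sum ht
    _ = (((layer p q ρ m).filter (fun t => ∃ s ∈ B, t ⊆ s)).card : ℝ)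
        / (NN p q ρ m : ℝ) := by
        rw [Finset.sum_const, nsmul_eq_mul, mul_one_div]

lemma rank_strict_mono {p q ρ : ℕ} {u v : Finset ℕ} (hu : u ∈ ball p q ρ)
    (hv : v ∈ ball p q ρ) (huv : u ⊆ v) (hne : u ≠ v) :
    hammingRank p ρ u < hammingRank p ρ v := by
  have h1 := rank_card hu
  have h2 := rank_card hv
  have h3 := Finset.card_lt_card (Finset.ssubset_iff_subset_ne.mpr ⟨huv, hne⟩)
  omega

lemma lym_aux (p q ρ : ℕ) : ∀ n (A : Finset (Finset ℕ)), (∀ S ∈ A, S ∈ ball p q ρ) →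
    IsAntichain (· ⊆ ·) (A : Set (Finset ℕ)) →
    (∀ S ∈ A, hammingRank p ρ S ≤ n) →
    ∑ S ∈ A, (1:ℝ) / (NN p q ρ (hammingRank p ρ S) : ℝ) ≤ 1 := by
  intro n
  induction n with
  | zero =>
    intro A hA hanti hrk
    have hsub : A ⊆ layer p q ρ 0 := fun S hS =>
      Finset.mem_filter.mpr ⟨hA S hS, Nat.le_zero.mp (hrk S hS)⟩
    have hconst : ∀ S ∈ A, (1:ℝ) / (NN p q ρ (hammingRank p ρ S) : ℝ)
        = 1 / (NN p q ρ 0 : ℝ) := fun S hS => by rw [Nat.le_zero.mp (hrk S hS)]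
    rw [Finset.sum_congr rfl hconst, Finset.sum_const, nsmul_eq_mul, mul_one_div]
    rcases A.eq_empty_or_nonempty with rfl | hne
    · simp
    · obtain ⟨S₀, hS₀⟩ := hne
      have hN0 : NN p q ρ 0 ≠ 0 := NN_pos_self (hsub hS₀)
      have hcard : (A.card : ℝ) ≤ (NN p q ρ 0 : ℝ) := by
        have h1 := Finset.card_le_card hsub
        rw [card_layer] at h1
        exact_mod_cast h1
      rw [div_le_one (by positivity)]
      exact hcard
  | succ m ih =>
    intro A hA hanti hrk
    have htop_sub : A.filter (fun S => hammingRank p ρ S = m+1) ⊆ layer p q ρ (m+1) :=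
      fun S hS => Finset.mem_filter.mpr
        ⟨hA S (Finset.filter_subset _ _ hS), (Finset.mem_filter.mp hS).2⟩
    set Atop := A.filter (fun S => hammingRank p ρ S = m+1) with hAtopdef
    set Arest := A.filter (fun S => ¬ hammingRank p ρ S = m+1) with hArestdef
    set shad := (layer p q ρ m).filter (fun t => ∃ s ∈ Atop, t ⊆ s) with hshaddef
    have hshad_layer : ∀ t ∈ shad, t ∈ layer p q ρ m := fun t ht =>
      (Finset.mem_filter.mp ht).1
    have hshad_rank : ∀ t ∈ shad, hammingRank p ρ t = m := fun t ht =>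
      (Finset.mem_filter.mp (hshad_layer t ht)).2
    have hshad_ball : ∀ t ∈ shad, t ∈ ball p q ρ := fun t ht =>
      (Finset.mem_filter.mp (hshad_layer t ht)).1
    have hshad_nA : ∀ t ∈ shad, t ∉ A := by
      intro t ht htA
      obtain ⟨s, hsAtop, hts⟩ := (Finset.mem_filter.mp ht).2
      have hsA : s ∈ A := Finset.filter_subset _ _ hsAtop
      have hrs : hammingRank p ρ s = m + 1 := (Finset.mem_filter.mp hsAtop).2
      have hrt : hammingRank p ρ t = m := hshad_rank t ht
      have hne : t ≠ s := fun h => by rw [h, hrs] at hrt; omega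
      exact hanti (Finset.mem_coe.mpr htA) (Finset.mem_coe.mpr hsA) hne hts
    have hdisj : Disjoint Arest shad := by
      rw [Finset.disjoint_left]
      intro t htArest htshad
      exact hshad_nA t htshad (Finset.filter_subset _ _ htArest)
    have hA'ball : ∀ S ∈ Arest ∪ shad, S ∈ ball p q ρ := by
      intro S hS
      rcases Finset.mem_union.mp hS with h | h
      · exact hA S (Finset.filter_subset _ _ h)
      · exact hshad_ball S h
    have hA'rank : ∀ S ∈ Arest ∪ shad, hammingRank p ρ S ≤ m := by
      intro S hS
      rcases Finset.mem_union.mp hS with h | h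
      · have h1 := hrk S (Finset.filter_subset _ _ h)
        have h2 := (Finset.mem_filter.mp h).2
        omega
      · rw [hshad_rank S h]
    have hA'anti : IsAntichain (· ⊆ ·)
        ((Arest ∪ shad : Finset (Finset ℕ)) : Set (Finset ℕ)) := by
      intro u hu v hv hne huv
      rw [Finset.mem_coe, Finset.mem_union] at hu hv
      rcases hu with hu | hu <;> rcases hv with hv | hv
      · exact hanti (Finset.mem_coe.mpr (Finset.filter_subset _ _ hu))
          (Finset.mem_coe.mpr (Finset.filter_subset _ _ hv)) hne huv
      · obtain ⟨s, hsAtop, hvs⟩ := (Finset.mem_filter.mp hv).2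
        have hsA : s ∈ A := Finset.filter_subset _ _ hsAtop
        have huA : u ∈ A := Finset.filter_subset _ _ hu
        have hrs : hammingRank p ρ s = m + 1 := (Finset.mem_filter.mp hsAtop).2
        have hru : hammingRank p ρ u ≤ m := hA'rank u (Finset.mem_union_left _ hu)
        have hnus : u ≠ s := fun h => by rw [h, hrs] at hru; omega
        exact hanti (Finset.mem_coe.mpr huA) (Finset.mem_coe.mpr hsA) hnus (huv.trans hvs)
      · have hru : hammingRank p ρ u = m := hshad_rank u hu
        have hrv : hammingRank p ρ v ≤ m := hA'rank v (Finset.mem_union_left _ hv)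
        have hlt := rank_strict_mono (hshad_ball u hu)
          (hA v (Finset.filter_subset _ _ hv)) huv hne
        omega
      · have hru : hammingRank p ρ u = m := hshad_rank u hu
        have hrv : hammingRank p ρ v = m := hshad_rank v hv
        have hlt := rank_strict_mono (hshad_ball u hu) (hshad_ball v hv) huv hne
        omega
    have hNM := NM Atop htop_sub
    rw [← hshaddef] at hNM
    have hsum_top : ∑ S ∈ Atop, (1:ℝ) / (NN p q ρ (hammingRank p ρ S) : ℝ)
        = (Atop.card : ℝ) / (NN p q ρ (m+1) : ℝ) := by
      have hc : ∀ S ∈ Atop, (1:ℝ) / (NN p q ρ (hammingRank p ρ S) : ℝ)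
          = 1 / (NN p q ρ (m+1) : ℝ) := fun S hS => by
        rw [(Finset.mem_filter.mp hS).2]
      rw [Finset.sum_congr rfl hc, Finset.sum_const, nsmul_eq_mul, mul_one_div]
    have hsum_shad : ∑ S ∈ shad, (1:ℝ) / (NN p q ρ (hammingRank p ρ S) : ℝ)
        = (shad.card : ℝ) / (NN p q ρ m : ℝ) := by
      have hc : ∀ S ∈ shad, (1:ℝ) / (NN p q ρ (hammingRank p ρ S) : ℝ)
          = 1 / (NN p q ρ m : ℝ) := fun S hS => by
        rw [hshad_rank S hS]
      rw [Finset.sum_congr rfl hc, Finset.sum_const, nsmul_eq_mul, mul_one_div]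
    have hsplitA : Atop ∪ Arest = A := Finset.filter_union_filter_not_eq _ A
    have hdisj2 : Disjoint Atop Arest := Finset.disjoint_filter_filter_not A A _
    calc ∑ S ∈ A, (1:ℝ) / (NN p q ρ (hammingRank p ρ S) : ℝ)
        = ∑ S ∈ Atop, (1:ℝ) / (NN p q ρ (hammingRank p ρ S) : ℝ)
          + ∑ S ∈ Arest, (1:ℝ) / (NN p q ρ (hammingRank p ρ S) : ℝ) := by
          rw [← Finset.sum_union hdisj2, hsplitA]
      _ ≤ (shad.card : ℝ) / (NN p q ρ m : ℝ)
          + ∑ S ∈ Arest, (1:ℝ) / (NN p q ρ (hammingRank p ρ S) : ℝ) := by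
          rw [hsum_top]
          exact add_le_add hNM le_rfl
      _ = ∑ S ∈ Arest ∪ shad, (1:ℝ) / (NN p q ρ (hammingRank p ρ S) : ℝ) := by
          rw [Finset.sum_union hdisj, hsum_shad]
          ring
      _ ≤ 1 := ih (Arest ∪ shad) hA'ball hA'anti hA'rank

end HBLYM

/-- **The Hamming ball `B_ρ[p,q]` is a LYM poset**: every antichain `A` (with respect
to inclusion) of subsets `S ⊆ {1,…,p+q}` with `|S ∆ {1,…,p}| ≤ ρ` satisfies
`∑_{S ∈ A} 1 / N_{r(S)} ≤ 1`. -/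
theorem hammingBall_isLYM (p q ρ : ℕ) (A : Finset (Finset ℕ))
    (hA : ∀ S ∈ A, memHammingBall p q ρ S)
    (hanti : IsAntichain (· ⊆ ·) (A : Set (Finset ℕ))) :
    ∑ S ∈ A, (1 : ℝ) / hammingLayerSize p q ρ (hammingRank p ρ S) ≤ 1 := by
  have hball : ∀ S ∈ A, S ∈ HBLYM.ball p q ρ := fun S hS =>
    Finset.mem_filter.mpr ⟨Finset.mem_powerset.mpr (hA S hS).1, hA S hS⟩
  have hrk : ∀ S ∈ A, hammingRank p ρ S ≤ min p ρ + q := by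
    intro S hS
    have h1 := HBLYM.rank_add (hball S hS)
    have h2 := HBLYM.jcoord_le (p := p) (HBLYM.mem_ball_iff.mp (hball S hS)).1
    omega
  have hmain := HBLYM.lym_aux p q ρ (min p ρ + q) A hball hanti hrk
  have hgoal : ∀ S ∈ A, (1 : ℝ) / hammingLayerSize p q ρ (hammingRank p ρ S)
      = (1:ℝ) / (HBLYM.NN p q ρ (hammingRank p ρ S) : ℝ) := fun S _ => by
    rw [HBLYM.hammingLayerSize_eq]
  rw [Finset.sum_congr rfl hgoal]
  exact hmain
end

section
/- Let P and Q be finite posets that are both LYM posets and log-concave. Then the product poset P × Q (with componentwise order) is a LYM poset. -/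
/-- The rank of an element of a (finite) poset: the length of the longest
chain strictly below it (equivalently, `r(x) = 0` for minimal `x` and
`r(x) = max {r(y) : y < x} + 1` otherwise). -/
noncomputable def rk {P : Type*} [Preorder P] (x : P) : ℕ :=
  (Order.height x).toNat

/-- The `k`-th layer of a poset: the set of elements of rank `k`. -/
def layerSet (P : Type*) [Preorder P] (k : ℕ) : Set P := {x : P | rk x = k}

/-- The size of the `k`-th layer. -/
noncomputable def layerCard (P : Type*) [Preorder P] (k : ℕ) : ℕ := (layerSet P k).ncard

/-- A finite poset is LYM if every antichain `A` satisfies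
`∑_{x ∈ A} 1 / |P_{r(x)}| ≤ 1`. -/
def IsLYM (P : Type*) [PartialOrder P] [Fintype P] : Prop :=
  ∀ A : Finset P, IsAntichain (· ≤ ·) (A : Set P) →
    ∑ x ∈ A, (1 : ℝ) / layerCard P (rk x) ≤ 1

/-- A poset is log-concave if its layer sizes `p_k` satisfy
`p_k ^ 2 ≥ p_{k-1} * p_{k+1}` for all `k ≥ 1`. -/
def LayerLogConcave (P : Type*) [Preorder P] : Prop :=
  ∀ k : ℕ, 1 ≤ k → layerCard P (k - 1) * layerCard P (k + 1) ≤ layerCard P k ^ 2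

open Finset Classical in
noncomputable def flayer (α : Type*) [Preorder α] [Fintype α] (k : ℕ) : Finset α :=
  Finset.univ.filter (fun x => rk x = k)

section RankBasics
open Classical
variable {α : Type*} [PartialOrder α] [Fintype α]

lemma height_lt_top (x : α) : Order.height x < ⊤ := by
  refine lt_of_le_of_lt (Order.height_le fun p _ => ?_) (ENat.coe_lt_top (Fintype.card α))
  exact_mod_cast le_of_lt p.length_lt_card

lemma height_eq_rk (x : α) : Order.height x = (rk x : ℕ∞) :=
  (ENat.coe_toNat (height_lt_top x).ne_top).symm

lemma rk_lt_rk {x y : α} (h : x < y) : rk x < rk y := by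
  have := Order.height_strictMono h (height_lt_top x)
  rw [height_eq_rk, height_eq_rk] at this
  exact_mod_cast this

lemma exists_rk_pred {x : α} {k : ℕ} (h : rk x = k + 1) : ∃ y, y < x ∧ rk y = k := by
  have hx : (k : ℕ∞) < Order.height x := by
    rw [height_eq_rk, h]; exact_mod_cast Nat.lt_succ_self k
  obtain ⟨y, hyx, hy⟩ := (Order.coe_lt_height_iff (height_lt_top x)).mp hx
  refine ⟨y, hyx, ?_⟩
  have := height_eq_rk y
  rw [hy] at this
  exact_mod_cast this.symm

lemma mem_flayer {x : α} {k : ℕ} : x ∈ flayer α k ↔ rk x = k := by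
  simp [flayer]

lemma layerCard_eq_card (k : ℕ) : layerCard α k = (flayer α k).card := by
  rw [layerCard, layerSet, flayer]
  rw [Set.ncard_eq_toFinset_card']
  congr 1
  ext x
  simp

lemma layerCard_pos (x : α) : 0 < layerCard α (rk x) := by
  rw [layerCard_eq_card]
  exact Finset.card_pos.mpr ⟨x, mem_flayer.mpr rfl⟩

lemma layerCard_pos_of_succ {k : ℕ} (h : 0 < layerCard α (k + 1)) : 0 < layerCard α k := by
  rw [layerCard_eq_card] at h
  obtain ⟨x, hx⟩ := Finset.card_pos.mp h
  obtain ⟨y, _, hy⟩ := exists_rk_pred (mem_flayer.mp hx)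
  rw [← hy]; exact layerCard_pos y

lemma layerCard_zero_succ {k : ℕ} (h : layerCard α k = 0) : layerCard α (k + 1) = 0 := by
  by_contra hne
  exact absurd (layerCard_pos_of_succ (Nat.pos_of_ne_zero hne)) (by omega)

lemma layerCard_zero_of_le {k l : ℕ} (h : layerCard α k = 0) (hkl : k ≤ l) :
    layerCard α l = 0 := by
  induction l with
  | zero => exact (Nat.le_zero.mp hkl ▸ h)
  | succ n ih =>
    rcases Nat.lt_or_ge k (n+1) with h'|h'
    · exact layerCard_zero_succ (ih (by omega))
    · have : k = n + 1 := by omega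
      exact this ▸ h

end RankBasics
open Classical in
/-- Up-shadow of `S ⊆ layer k` : elements of layer `k+1` above something in `S`. -/
noncomputable def upSh (α : Type*) [PartialOrder α] [Fintype α] (k : ℕ) (S : Finset α) :
    Finset α := (flayer α (k+1)).filter (fun y => ∃ x ∈ S, x < y)

open Classical in
/-- Down-shadow of `T ⊆ layer (k+1)` : elements of layer `k` below something in `T`. -/
noncomputable def downSh (α : Type*) [PartialOrder α] [Fintype α] (k : ℕ) (T : Finset α) :
    Finset α := (flayer α k).filter (fun y => ∃ x ∈ T, y < x)

/-- Upward normalized matching property. -/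
def NMPup (α : Type*) [PartialOrder α] [Fintype α] : Prop :=
  ∀ (k : ℕ) (S : Finset α), S ⊆ flayer α k →
    S.card * layerCard α (k+1) ≤ (upSh α k S).card * layerCard α k

/-- Downward normalized matching property. -/
def NMPdown (α : Type*) [PartialOrder α] [Fintype α] : Prop :=
  ∀ (k : ℕ) (T : Finset α), T ⊆ flayer α (k+1) →
    T.card * layerCard α k ≤ (downSh α k T).card * layerCard α (k+1)

section NMP
open Classical
variable {α : Type*} [PartialOrder α] [Fintype α]

lemma upSh_subset {k : ℕ} {S : Finset α} : upSh α k S ⊆ flayer α (k+1) :=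
  Finset.filter_subset _ _

lemma downSh_subset {k : ℕ} {T : Finset α} : downSh α k T ⊆ flayer α k :=
  Finset.filter_subset _ _

lemma isLYM_nmpUp (h : IsLYM α) : NMPup α := by
  intro k S hS
  rcases Nat.eq_zero_or_pos (layerCard α (k+1)) with h1 | h1
  · simp [h1]
  rcases Nat.eq_zero_or_pos (layerCard α k) with h0 | h0
  · have : S = ∅ := by
      rw [Finset.eq_empty_iff_forall_notMem]
      intro x hx
      have := layerCard_pos x
      rw [mem_flayer.mp (hS hx)] at this
      omega
    simp [this]
  -- the antichain S ∪ (layer (k+1) \ upSh S)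
  set T : Finset α := flayer α (k+1) \ upSh α k S with hT
  have hSrk : ∀ x ∈ S, rk x = k := fun x hx => mem_flayer.mp (hS hx)
  have hTrk : ∀ x ∈ T, rk x = k+1 := fun x hx =>
    mem_flayer.mp (Finset.mem_sdiff.mp hx).1
  have hdisj : Disjoint S T := by
    rw [Finset.disjoint_left]
    intro x hx hx'
    have := hSrk x hx; have := hTrk x hx'; omega
  have hanti : IsAntichain (· ≤ ·) ((S ∪ T : Finset α) : Set α) := by
    intro u hu v hv huv hle
    simp only [Finset.coe_union, Set.mem_union, Finset.mem_coe] at hu hv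
    have hlt : u < v := lt_of_le_of_ne hle huv
    rcases hu with hu | hu <;> rcases hv with hv | hv
    · have := hSrk u hu; have := hSrk v hv; have := rk_lt_rk hlt; omega
    · rcases Finset.mem_sdiff.mp hv with ⟨hv1, hv2⟩
      exact hv2 (Finset.mem_filter.mpr ⟨hv1, u, hu, hlt⟩)
    · have := hTrk u hu; have := hSrk v hv; have := rk_lt_rk hlt; omega
    · have := hTrk u hu; have := hTrk v hv; have := rk_lt_rk hlt; omega
  have hsum := h (S ∪ T) hanti
  rw [Finset.sum_union hdisj] at hsum
  have hsumS : ∑ x ∈ S, (1 : ℝ) / layerCard α (rk x) = S.card / layerCard α k := by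
    rw [Finset.sum_congr rfl (fun x hx => by rw [hSrk x hx])]
    simp [div_eq_mul_inv]
  have hsumT : ∑ x ∈ T, (1 : ℝ) / layerCard α (rk x) = T.card / layerCard α (k+1) := by
    rw [Finset.sum_congr rfl (fun x hx => by rw [hTrk x hx])]
    simp [div_eq_mul_inv]
  rw [hsumS, hsumT] at hsum
  have hle : (upSh α k S).card ≤ layerCard α (k+1) := by
    rw [layerCard_eq_card]; exact Finset.card_le_card upSh_subset
  have hTcard : (T.card : ℝ) = layerCard α (k+1) - (upSh α k S).card := by
    rw [hT, Finset.card_sdiff_of_subset upSh_subset, ← layerCard_eq_card]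
    push_cast [Nat.cast_sub hle]
    ring
  rw [hTcard] at hsum
  have h0' : (0:ℝ) < layerCard α k := by exact_mod_cast h0
  have h1' : (0:ℝ) < layerCard α (k+1) := by exact_mod_cast h1
  have key : (S.card : ℝ) / layerCard α k ≤ (upSh α k S).card / layerCard α (k+1) := by
    have : (layerCard α (k+1) - (upSh α k S).card : ℝ) / layerCard α (k+1)
        = 1 - (upSh α k S).card / layerCard α (k+1) := by field_simp
    rw [this] at hsum; linarith
  rw [div_le_div_iff₀ h0' h1'] at key
  exact_mod_cast key

lemma nmpUp_nmpDown (h : NMPup α) : NMPdown α := by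
  intro k T hT
  set S : Finset α := flayer α k \ downSh α k T with hS
  have hkey := h k S (Finset.sdiff_subset)
  have hsub : upSh α k S ⊆ flayer α (k+1) \ T := by
    intro y hy
    rcases Finset.mem_filter.mp hy with ⟨hy1, x, hx, hxy⟩
    rcases Finset.mem_sdiff.mp hx with ⟨hx1, hx2⟩
    refine Finset.mem_sdiff.mpr ⟨hy1, fun hyT => hx2 ?_⟩
    exact Finset.mem_filter.mpr ⟨hx1, y, hyT, hxy⟩
  have hScard : S.card = layerCard α k - (downSh α k T).card := by
    rw [hS, Finset.card_sdiff_of_subset downSh_subset, layerCard_eq_card]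
  have hupcard : (upSh α k S).card ≤ layerCard α (k+1) - T.card := by
    calc (upSh α k S).card ≤ (flayer α (k+1) \ T).card := Finset.card_le_card hsub
    _ = layerCard α (k+1) - T.card := by rw [Finset.card_sdiff_of_subset hT, layerCard_eq_card]
  have hd : (downSh α k T).card ≤ layerCard α k := by
    rw [layerCard_eq_card]; exact Finset.card_le_card downSh_subset
  have ht : T.card ≤ layerCard α (k+1) := by
    rw [layerCard_eq_card]; exact Finset.card_le_card hT
  have hkey2 : (layerCard α k - (downSh α k T).card) * layerCard α (k+1)
      ≤ (layerCard α (k+1) - T.card) * layerCard α k := by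
    calc (layerCard α k - (downSh α k T).card) * layerCard α (k+1)
        = S.card * layerCard α (k+1) := by rw [hScard]
      _ ≤ (upSh α k S).card * layerCard α k := hkey
      _ ≤ (layerCard α (k+1) - T.card) * layerCard α k :=
          Nat.mul_le_mul_right _ hupcard
  zify [hd, ht] at hkey2
  zify
  nlinarith
end NMP

section ProdRank
open Classical
variable {P Q : Type*} [PartialOrder P] [Fintype P] [PartialOrder Q] [Fintype Q]

lemma rk_mono {x y : P} (h : x ≤ y) : rk x ≤ rk y := by
  have := Order.height_mono h
  rw [height_eq_rk, height_eq_rk] at this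
  exact_mod_cast this

lemma rk_prod (x : P) (y : Q) : rk ((x, y) : P × Q) = rk x + rk y := by
  have hle : Order.height ((x,y) : P × Q) ≤ ((rk x + rk y : ℕ) : ℕ∞) := by
    apply Order.height_le
    intro p hlast
    have hf : StrictMono (fun u : P × Q => rk u.1 + rk u.2) := by
      intro u v huv
      show rk u.1 + rk u.2 < rk v.1 + rk v.2
      rcases Prod.lt_iff.mp huv with ⟨h1, h2⟩ | ⟨h1, h2⟩
      · have := rk_lt_rk h1; have := rk_mono h2; omega
      · have := rk_mono h1; have := rk_lt_rk h2; omega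
    have h1 := LTSeries.head_add_length_le_nat (p.map _ hf)
    rw [LTSeries.last_map, hlast] at h1
    have h2 : p.length ≤ rk x + rk y := by
      simpa using le_trans (Nat.le_add_left _ _) h1
    exact_mod_cast h2
  have hge : ((rk x + rk y : ℕ) : ℕ∞) ≤ Order.height ((x,y) : P × Q) := by
    obtain ⟨pP, hPlast, hPlen⟩ := Order.exists_series_of_height_eq_coe x (height_eq_rk x)
    obtain ⟨pQ, hQlast, hQlen⟩ := Order.exists_series_of_height_eq_coe y (height_eq_rk y)
    have hf1 : StrictMono (fun a : P => ((a, pQ.head) : P × Q)) :=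
      fun a b hab => Prod.mk_lt_mk_iff_left.mpr hab
    have hf2 : StrictMono (fun b : Q => ((x, b) : P × Q)) :=
      fun a b hab => Prod.mk_lt_mk_iff_right.mpr hab
    have hconn : (pP.map _ hf1).last = (pQ.map _ hf2).head := by
      rw [LTSeries.last_map, LTSeries.head_map, hPlast]
    have hlen := Order.length_le_height_last (p := RelSeries.smash _ _ hconn)
    rw [RelSeries.last_smash, LTSeries.last_map, hQlast] at hlen
    have : (RelSeries.smash _ _ hconn).length = rk x + rk y := by
      simp [RelSeries.smash, hPlen, hQlen]
    rwa [this] at hlen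
  have : Order.height ((x,y) : P × Q) = ((rk x + rk y : ℕ) : ℕ∞) := le_antisymm hle hge
  rw [height_eq_rk] at this
  exact_mod_cast this

lemma flayer_prod (n : ℕ) :
    flayer (P × Q) n =
      (Finset.range (n+1)).biUnion
        (fun i => (flayer P i) ×ˢ (flayer Q (n - i))) := by
  ext ⟨x, y⟩
  simp only [mem_flayer, Finset.mem_biUnion, Finset.mem_range, Finset.mem_product, rk_prod]
  constructor
  · rintro rfl
    exact ⟨rk x, by omega, rfl, by omega⟩
  · rintro ⟨i, hi, hx, hy⟩
    omega

lemma layerCard_prod (n : ℕ) :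
    layerCard (P × Q) n = ∑ i ∈ Finset.range (n+1), layerCard P i * layerCard Q (n - i) := by
  rw [layerCard_eq_card, flayer_prod, Finset.card_biUnion]
  · exact Finset.sum_congr rfl fun i _ => by
      rw [Finset.card_product, layerCard_eq_card, layerCard_eq_card]
  · intro i hi j hj hij
    simp only [Finset.disjoint_left, Finset.mem_product]
    rintro ⟨x, y⟩ ⟨hx, -⟩ ⟨hx', -⟩
    exact hij (by rw [← mem_flayer.mp hx, ← mem_flayer.mp hx'])

end ProdRank

section Flow
open Classical Finset
variable {α : Type*} [PartialOrder α] [Fintype α]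

/-- From the normalized matching property, build an integer-valued "flow" between
consecutive layers with constant row sums and column sums. -/
lemma exists_flow (h : NMPup α) (k : ℕ) (hk1 : 0 < layerCard α (k+1)) :
    ∃ w : α → α → ℕ,
      (∀ x y, w x y ≠ 0 → x ∈ flayer α k ∧ y ∈ flayer α (k+1) ∧ x < y) ∧
      (∀ x ∈ flayer α k, ∑ y, w x y = layerCard α (k+1)) ∧
      (∀ y ∈ flayer α (k+1), ∑ x, w x y = layerCard α k) := by
  set pk := layerCard α k with hpk
  set pk1 := layerCard α (k+1) with hpk1
  have hk0 : 0 < pk := layerCard_pos_of_succ hk1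
  -- Hall's theorem setup
  set ι := {x // x ∈ flayer α k} × Fin pk1 with hι
  set t : ι → Finset (α × Fin pk) :=
    fun i => ((flayer α (k+1)).filter (fun y => (i.1 : α) < y)) ×ˢ Finset.univ with ht
  have hall : ∀ s : Finset ι, s.card ≤ (s.biUnion t).card := by
    intro s
    set s₀ : Finset α := s.image (fun i => (i.1 : α)) with hs₀
    have hs₀sub : s₀ ⊆ flayer α k := by
      intro x hx
      obtain ⟨i, _, rfl⟩ := Finset.mem_image.mp hx
      exact i.1.2
    have hbi : s.biUnion t = (upSh α k s₀) ×ˢ (Finset.univ : Finset (Fin pk)) := by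
      ext ⟨y, c⟩
      simp only [Finset.mem_biUnion, ht, Finset.mem_product, Finset.mem_filter,
        Finset.mem_univ, and_true, upSh, hs₀, Finset.mem_image]
      constructor
      · rintro ⟨i, hi, hy, hlt⟩
        exact ⟨hy, (i.1 : α), ⟨i, hi, rfl⟩, hlt⟩
      · rintro ⟨hy, x, ⟨i, hi, rfl⟩, hlt⟩
        exact ⟨i, hi, hy, hlt⟩
    have h1 : s.card ≤ s₀.card * pk1 := by
      have hinj : Function.Injective (fun i : ι => ((i.1 : α), i.2)) := by
        rintro ⟨⟨x, hx⟩, c⟩ ⟨⟨x', hx'⟩, c'⟩ hEq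
        simp only [Prod.mk.injEq] at hEq
        simp [Prod.ext_iff, Subtype.ext_iff, hEq.1, hEq.2]
      calc s.card = (s.image (fun i : ι => ((i.1 : α), i.2))).card :=
            (Finset.card_image_of_injective _ hinj).symm
        _ ≤ (s₀ ×ˢ (Finset.univ : Finset (Fin pk1))).card := by
            apply Finset.card_le_card
            intro u hu
            obtain ⟨i, hi, rfl⟩ := Finset.mem_image.mp hu
            exact Finset.mem_product.mpr ⟨Finset.mem_image.mpr ⟨i, hi, rfl⟩, Finset.mem_univ _⟩
        _ = s₀.card * pk1 := by rw [Finset.card_product]; simp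
    have h2 := h k s₀ hs₀sub
    calc s.card ≤ s₀.card * pk1 := h1
      _ ≤ (upSh α k s₀).card * pk := h2
      _ = (s.biUnion t).card := by rw [hbi, Finset.card_product]; simp
  obtain ⟨f, hfinj, hft⟩ := (Finset.all_card_le_biUnion_card_iff_exists_injective t).mp hall
  -- the flow
  set w : α → α → ℕ := fun x y =>
    if hx : x ∈ flayer α k then
      (Finset.univ.filter (fun c : Fin pk1 => (f (⟨x, hx⟩, c)).1 = y)).card
    else 0 with hw
  have hft1 : ∀ (x : {x // x ∈ flayer α k}) (c : Fin pk1),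
      (f (x, c)).1 ∈ flayer α (k+1) ∧ (x : α) < (f (x, c)).1 := by
    intro x c
    have := hft (x, c)
    rw [ht] at this
    have := Finset.mem_product.mp this
    exact Finset.mem_filter.mp this.1
  refine ⟨w, ?_, ?_, ?_⟩
  · -- support
    intro x y hne
    rw [hw] at hne
    simp only at hne
    split_ifs at hne with hx
    · obtain ⟨c, hc⟩ := Finset.card_pos.mp (Nat.pos_of_ne_zero hne)
      have := Finset.mem_filter.mp hc
      refine ⟨hx, ?_, ?_⟩
      · rw [← this.2]; exact (hft1 ⟨x, hx⟩ c).1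
      · rw [← this.2]; exact (hft1 ⟨x, hx⟩ c).2
    · exact absurd rfl hne
  · -- row sums
    intro x hx
    have : ∀ y, w x y = (Finset.univ.filter
        (fun c : Fin pk1 => (f (⟨x, hx⟩, c)).1 = y)).card := by
      intro y; rw [hw]; simp only; rw [dif_pos hx]
    simp only [this]
    rw [← Finset.card_eq_sum_card_fiberwise (fun c _ => Finset.mem_univ ((f (⟨x, hx⟩, c)).1))]
    simp
  · -- column sums
    intro y hy
    set N : α → ℕ := fun y' => ((Finset.univ : Finset ι).filter (fun i => (f i).1 = y')).card
      with hN
    have hcol : ∀ y' : α, ∑ x, w x y' = N y' := by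
      intro y'
      have step1 : ∑ x : α, w x y' = ∑ x ∈ flayer α k, w x y' :=
        (Finset.sum_subset (Finset.subset_univ _) (fun x _ hx => by
          rw [hw]; simp only; rw [dif_neg hx])).symm
      have step2 : ∑ x ∈ flayer α k, w x y'
          = ∑ x ∈ (flayer α k).attach,
              (Finset.univ.filter (fun c : Fin pk1 => (f (x, c)).1 = y')).card := by
        rw [← Finset.sum_attach (flayer α k) (fun x => w x y')]
        apply Finset.sum_congr rfl
        intro x _
        rw [hw]; simp only; rw [dif_pos x.2]
      have step3 : N y' = ∑ x ∈ (flayer α k).attach,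
          (Finset.univ.filter (fun c : Fin pk1 => (f (x, c)).1 = y')).card := by
        rw [hN]
        simp only [Finset.card_filter]
        rw [Fintype.sum_prod_type, Finset.univ_eq_attach]
      rw [step1, step2, step3]
    have hNle : ∀ y' : α, N y' ≤ pk := by
      intro y'
      rw [hN]
      have : ((Finset.univ : Finset ι).filter (fun i => (f i).1 = y')).card
          ≤ (Finset.univ : Finset (Fin pk)).card := by
        apply Finset.card_le_card_of_injOn (fun i => (f i).2)
        · intro i _; exact Finset.mem_univ _
        · intro i hi j hj hEq
          apply hfinj
          have hi' := (Finset.mem_filter.mp hi).2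
          have hj' := (Finset.mem_filter.mp hj).2
          exact Prod.ext (hi'.trans hj'.symm) hEq
      simpa using this
    have hNzero : ∀ y' : α, y' ∉ flayer α (k+1) → N y' = 0 := by
      intro y' hy'
      rw [hN, Finset.card_eq_zero, Finset.filter_eq_empty_iff]
      intro i _
      rintro rfl
      exact hy' (hft1 i.1 i.2).1
    have htot : ∑ y' ∈ flayer α (k+1), N y' = pk * pk1 := by
      have h1 : ∑ y' : α, N y' = Fintype.card ι := by
        rw [hN, ← Finset.card_univ]
        exact (Finset.card_eq_sum_card_fiberwise (fun i _ =>
          Finset.mem_univ ((f i).1))).symm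
      have h2 : ∑ y' : α, N y' = ∑ y' ∈ flayer α (k+1), N y' :=
        (Finset.sum_subset (Finset.subset_univ _) (fun y' _ hy' => hNzero y' hy')).symm
      have h3 : Fintype.card ι = pk * pk1 := by
        show Fintype.card ({x // x ∈ flayer α k} × Fin pk1) = pk * pk1
        rw [Fintype.card_prod, Fintype.card_coe, Fintype.card_fin, ← layerCard_eq_card]
      omega
    -- each column sum equals pk
    by_contra hne
    rw [hcol y] at hne
    have hlt : N y < pk := lt_of_le_of_ne (hNle y) hne
    have : ∑ y' ∈ flayer α (k+1), N y' < ∑ y' ∈ flayer α (k+1), pk :=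
      Finset.sum_lt_sum (fun i _ => hNle i) ⟨y, hy, hlt⟩
    rw [htot, Finset.sum_const, smul_eq_mul, ← layerCard_eq_card, ← hpk1,
      Nat.mul_comm pk1 pk] at this
    exact lt_irrefl _ this
end Flow

section LogConcave
open Finset

/-- Log-concavity plus interval support gives monotone ratios. -/
lemma layer_ratio {α : Type*} [PartialOrder α] [Fintype α] (hlc : LayerLogConcave α) :
    ∀ j l, j ≤ l → layerCard α j * layerCard α (l+1) ≤ layerCard α (j+1) * layerCard α l := by
  intro j l hjl
  induction l, hjl using Nat.le_induction with
  | base => rw [Nat.mul_comm]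
  | succ l hjl ih =>
    rcases Nat.eq_zero_or_pos (layerCard α (l+1)) with h0 | h0
    · rw [layerCard_zero_succ h0, Nat.mul_zero]; exact Nat.zero_le _
    rcases Nat.eq_zero_or_pos (layerCard α l) with h1 | h1
    · exact absurd (layerCard_zero_succ h1) (by omega)
    have hadj : layerCard α l * layerCard α (l+2) ≤ layerCard α (l+1) ^ 2 := by
      have := hlc (l+1) (by omega)
      simpa using this
    have key : (layerCard α j * layerCard α (l+2)) * layerCard α l
        ≤ (layerCard α (j+1) * layerCard α (l+1)) * layerCard α l := by
      calc (layerCard α j * layerCard α (l+2)) * layerCard α l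
          = layerCard α j * (layerCard α l * layerCard α (l+2)) := by ring
        _ ≤ layerCard α j * (layerCard α (l+1) ^ 2) := Nat.mul_le_mul_left _ hadj
        _ = (layerCard α j * layerCard α (l+1)) * layerCard α (l+1) := by ring
        _ ≤ (layerCard α (j+1) * layerCard α l) * layerCard α (l+1) :=
            Nat.mul_le_mul_right _ ih
        _ = (layerCard α (j+1) * layerCard α (l+1)) * layerCard α l := by ring
    exact Nat.le_of_mul_le_mul_right key h1

/-- Cross-multiplication inequality for sums, given a pairwise "ratio" inequality. -/
lemma cross_sum {u v : ℕ → ℕ} {t m : ℕ}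
    (h : ∀ j l, j < t → t ≤ l → l < m → u j * v l ≤ v j * u l) :
    (∑ j ∈ range m, u j) * (∑ l ∈ Ico t m, v l)
      ≤ (∑ j ∈ range m, v j) * (∑ l ∈ Ico t m, u l) := by
  rcases Nat.lt_or_ge t m with htm | htm
  · have hsplit_u : ∑ j ∈ range m, u j = ∑ j ∈ range t, u j + ∑ j ∈ Ico t m, u j := by
      rw [range_eq_Ico, ← Finset.sum_Ico_consecutive _ (Nat.zero_le t) (le_of_lt htm),
        ← range_eq_Ico]
    have hsplit_v : ∑ j ∈ range m, v j = ∑ j ∈ range t, v j + ∑ j ∈ Ico t m, v j := by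
      rw [range_eq_Ico, ← Finset.sum_Ico_consecutive _ (Nat.zero_le t) (le_of_lt htm),
        ← range_eq_Ico]
    have hcross : (∑ j ∈ range t, u j) * (∑ l ∈ Ico t m, v l)
        ≤ (∑ j ∈ range t, v j) * (∑ l ∈ Ico t m, u l) := by
      rw [Finset.sum_mul_sum, Finset.sum_mul_sum]
      apply Finset.sum_le_sum
      intro j hj
      apply Finset.sum_le_sum
      intro l hl
      exact h j l (mem_range.mp hj) (mem_Ico.mp hl).1 (mem_Ico.mp hl).2
    rw [hsplit_u, hsplit_v, Nat.add_mul, Nat.add_mul]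
    exact Nat.add_le_add hcross (by rw [Nat.mul_comm])
  · have : Ico t m = ∅ := Ico_eq_empty (by omega)
    simp [this]

end LogConcave

section Staircase
open Finset
variable (P Q : Type*) [PartialOrder P] [Fintype P] [PartialOrder Q] [Fintype Q]

/-- `aseq n l = p_l * q_{n-l}` (0 out of range). -/
noncomputable def aseq (n l : ℕ) : ℕ :=
  if l ≤ n then layerCard P l * layerCard Q (n - l) else 0

lemma layerCard_prod_eq_sum (n : ℕ) :
    layerCard (P × Q) n = ∑ l ∈ range (n+2), aseq P Q n l := by
  rw [layerCard_prod]
  rw [Finset.sum_range_succ (n := n+1)]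
  have : aseq P Q n (n+1) = 0 := by simp [aseq]
  rw [this, Nat.add_zero]
  exact Finset.sum_congr rfl fun i hi => by
    rw [aseq, if_pos (by exact Nat.lt_succ_iff.mp (mem_range.mp hi))]

variable {P Q}

lemma staircase_alpha (hQlc : LayerLogConcave Q) (n t : ℕ) :
    layerCard (P × Q) (n+1) * (∑ l ∈ Ico t (n+2), aseq P Q n l)
      ≤ layerCard (P × Q) n * (∑ l ∈ Ico t (n+2), aseq P Q (n+1) l) := by
  rw [layerCard_prod_eq_sum P Q n, layerCard_prod_eq_sum P Q (n+1)]
  have hext : ∑ l ∈ range (n+3), aseq P Q (n+1) l = ∑ l ∈ range (n+2), aseq P Q (n+1) l := by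
    rw [Finset.sum_range_succ]
    simp [aseq]
  rw [hext]
  apply cross_sum
  intro j l hjt htl hlm
  rcases Nat.lt_or_ge n l with hl | hl
  · have : aseq P Q n l = 0 := by rw [aseq, if_neg (by omega)]
    rw [this, Nat.mul_zero]; exact Nat.zero_le _
  have hjl : j < l := lt_of_lt_of_le hjt htl
  rw [aseq, aseq, aseq, aseq, if_pos (by omega : j ≤ n+1), if_pos hl,
    if_pos (by omega : j ≤ n), if_pos (by omega : l ≤ n+1)]
  have hq : layerCard Q (n - l) * layerCard Q ((n - j) + 1)
      ≤ layerCard Q ((n - l) + 1) * layerCard Q (n - j) :=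
    layer_ratio hQlc (n - l) (n - j) (by omega)
  have e1 : n + 1 - j = (n - j) + 1 := by omega
  have e2 : n + 1 - l = (n - l) + 1 := by omega
  rw [e1, e2]
  calc layerCard P j * layerCard Q ((n-j)+1) * (layerCard P l * layerCard Q (n-l))
      = (layerCard P j * layerCard P l) * (layerCard Q (n-l) * layerCard Q ((n-j)+1)) := by ring
    _ ≤ (layerCard P j * layerCard P l) * (layerCard Q ((n-l)+1) * layerCard Q (n-j)) :=
        Nat.mul_le_mul_left _ hq
    _ = layerCard P j * layerCard Q (n-j) * (layerCard P l * layerCard Q ((n-l)+1)) := by ring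

lemma staircase_beta (hPlc : LayerLogConcave P) (n t : ℕ) :
    layerCard (P × Q) n * (∑ l ∈ Ico (t+1) (n+3), aseq P Q (n+1) l)
      ≤ layerCard (P × Q) (n+1) * (∑ l ∈ Ico t (n+2), aseq P Q n l) := by
  -- reindex the (n+1)-sum via b l := aseq (n+1) (l+1)
  have hreidx : ∑ l ∈ Ico (t+1) (n+3), aseq P Q (n+1) l
      = ∑ l ∈ Ico t (n+2), aseq P Q (n+1) (l+1) := by
    rw [← Finset.sum_Ico_add' (fun l => aseq P Q (n+1) l) t (n+2) 1]
  rw [hreidx]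
  have key : (∑ j ∈ range (n+2), aseq P Q n j) * (∑ l ∈ Ico t (n+2), aseq P Q (n+1) (l+1))
      ≤ (∑ j ∈ range (n+2), aseq P Q (n+1) (j+1)) * (∑ l ∈ Ico t (n+2), aseq P Q n l) := by
    apply cross_sum
    intro j l hjt htl hlm
    rcases Nat.lt_or_ge n l with hl | hl
    · have : aseq P Q (n+1) (l+1) = 0 := by rw [aseq, if_neg (by omega)]
      rw [this, Nat.mul_zero]; exact Nat.zero_le _
    have hjl : j < l := lt_of_lt_of_le hjt htl
    rw [aseq, aseq, aseq, aseq, if_pos (by omega : j ≤ n), if_pos (by omega : l + 1 ≤ n + 1),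
      if_pos (by omega : j + 1 ≤ n + 1), if_pos hl]
    have hp : layerCard P j * layerCard P (l+1) ≤ layerCard P (j+1) * layerCard P l :=
      layer_ratio hPlc j l (by omega)
    have e1 : n + 1 - (j+1) = n - j := by omega
    have e2 : n + 1 - (l+1) = n - l := by omega
    rw [e1, e2]
    calc layerCard P j * layerCard Q (n-j) * (layerCard P (l+1) * layerCard Q (n-l))
        = (layerCard P j * layerCard P (l+1)) * (layerCard Q (n-j) * layerCard Q (n-l)) := by ring
      _ ≤ (layerCard P (j+1) * layerCard P l) * (layerCard Q (n-j) * layerCard Q (n-l)) :=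
          Nat.mul_le_mul_right _ hp
      _ = layerCard P (j+1) * layerCard Q (n-j) * (layerCard P l * layerCard Q (n-l)) := by ring
  have hBtot : ∑ j ∈ range (n+2), aseq P Q (n+1) (j+1) ≤ layerCard (P × Q) (n+1) := by
    rw [layerCard_prod_eq_sum P Q (n+1)]
    have : ∑ j ∈ range (n+2), aseq P Q (n+1) (j+1)
        = ∑ j ∈ Ico 1 (n+3), aseq P Q (n+1) j := by
      rw [← Finset.sum_Ico_add' (fun l => aseq P Q (n+1) l) 0 (n+2) 1, range_eq_Ico]
    rw [this, range_eq_Ico]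
    exact Finset.sum_le_sum_of_subset (Finset.Ico_subset_Ico (by omega) (by omega))
  calc layerCard (P × Q) n * (∑ l ∈ Ico t (n+2), aseq P Q (n+1) (l+1))
      = (∑ j ∈ range (n+2), aseq P Q n j) * (∑ l ∈ Ico t (n+2), aseq P Q (n+1) (l+1)) := by
        rw [← layerCard_prod_eq_sum]
    _ ≤ (∑ j ∈ range (n+2), aseq P Q (n+1) (j+1)) * (∑ l ∈ Ico t (n+2), aseq P Q n l) := key
    _ ≤ layerCard (P × Q) (n+1) * (∑ l ∈ Ico t (n+2), aseq P Q n l) :=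
        Nat.mul_le_mul_right _ hBtot

end Staircase

section ProdNMP
open Classical Finset
variable {P Q : Type*} [PartialOrder P] [Fintype P] [PartialOrder Q] [Fintype Q]

lemma rk_prod' (u : P × Q) : rk u = rk u.1 + rk u.2 := by
  simpa using rk_prod u.1 u.2

lemma nmpUp_prod (hP' : NMPup P) (hQ' : NMPup Q)
    (hPlc : LayerLogConcave P) (hQlc : LayerLogConcave Q) : NMPup (P × Q) := by
  intro n S hS
  rcases Nat.eq_zero_or_pos (layerCard (P × Q) (n+1)) with hrn1 | hrn1
  · simp [hrn1]
  rcases Nat.eq_zero_or_pos (layerCard (P × Q) n) with hrn | hrn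
  · have : S.card = 0 := by
      have h1 : S.card ≤ (flayer (P × Q) n).card := Finset.card_le_card hS
      rw [← layerCard_eq_card] at h1
      omega
    simp [this]
  -- flows for the factors
  have hflowP : ∀ i : ℕ, ∃ w : P → P → ℕ,
      (∀ x y, w x y ≠ 0 → x ∈ flayer P i ∧ y ∈ flayer P (i+1) ∧ x < y) ∧
      (∀ x ∈ flayer P i, 0 < layerCard P (i+1) → ∑ y, w x y = layerCard P (i+1)) ∧
      (∀ y ∈ flayer P (i+1), ∑ x, w x y = layerCard P i) := by
    intro i
    rcases Nat.eq_zero_or_pos (layerCard P (i+1)) with h0 | h0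
    · refine ⟨fun _ _ => 0, by simp, fun x hx hpos => by omega, ?_⟩
      intro y hy
      have := layerCard_pos y
      rw [mem_flayer.mp hy] at this
      omega
    · obtain ⟨w, h1, h2, h3⟩ := exists_flow hP' i h0
      exact ⟨w, h1, fun x hx _ => h2 x hx, h3⟩
  have hflowQ : ∀ j : ℕ, ∃ w : Q → Q → ℕ,
      (∀ x y, w x y ≠ 0 → x ∈ flayer Q j ∧ y ∈ flayer Q (j+1) ∧ x < y) ∧
      (∀ x ∈ flayer Q j, 0 < layerCard Q (j+1) → ∑ y, w x y = layerCard Q (j+1)) ∧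
      (∀ y ∈ flayer Q (j+1), ∑ x, w x y = layerCard Q j) := by
    intro j
    rcases Nat.eq_zero_or_pos (layerCard Q (j+1)) with h0 | h0
    · refine ⟨fun _ _ => 0, by simp, fun x hx hpos => by omega, ?_⟩
      intro y hy
      have := layerCard_pos y
      rw [mem_flayer.mp hy] at this
      omega
    · obtain ⟨w, h1, h2, h3⟩ := exists_flow hQ' j h0
      exact ⟨w, h1, fun x hx _ => h2 x hx, h3⟩
  choose wp hwpSupp hwpRow hwpCol using hflowP
  choose wq hwqSupp hwqRow hwqCol using hflowQ
  have hwp_self : ∀ i x, wp i x x = 0 := by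
    intro i x
    by_contra hne
    exact absurd (hwpSupp i x x hne).2.2 (lt_irrefl x)
  have hwq_self : ∀ j y, wq j y y = 0 := by
    intro j y
    by_contra hne
    exact absurd (hwqSupp j y y hne).2.2 (lt_irrefl y)
  -- the staircase quantities
  set rn : ℝ := (layerCard (P × Q) n : ℝ) with hrnDef
  set rn1 : ℝ := (layerCard (P × Q) (n+1) : ℝ) with hrn1Def
  have hrnR : 0 < rn := by rw [hrnDef]; exact_mod_cast hrn
  have hrn1R : 0 < rn1 := by rw [hrn1Def]; exact_mod_cast hrn1
  set AN : ℕ → ℕ := fun t => ∑ l ∈ Ico t (n+2), aseq P Q n l with hANdef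
  set DN : ℕ → ℕ := fun t => ∑ l ∈ Ico t (n+3), aseq P Q (n+1) l with hDNdef
  set al : ℕ → ℝ := fun t => (DN (t+1) : ℝ) / rn1 - (AN (t+1) : ℝ) / rn with haldef
  set be : ℕ → ℝ := fun t => (AN t : ℝ) / rn - (DN (t+1) : ℝ) / rn1 with hbedef
  have hDNtrim : ∀ t, DN t = ∑ l ∈ Ico t (n+2), aseq P Q (n+1) l := by
    intro t
    simp only [hDNdef]
    rcases le_or_gt t (n+2) with ht | ht
    · rw [Finset.sum_Ico_succ_top (by omega : t ≤ n + 2)]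
      have : aseq P Q (n+1) (n+2) = 0 := by rw [aseq, if_neg (by omega)]
      simp [this]
    · rw [Ico_eq_empty (by omega), Ico_eq_empty (by omega)]
  have hANstep : ∀ t, AN t = aseq P Q n t + AN (t+1) := by
    intro t
    simp only [hANdef]
    rcases Nat.lt_or_ge t (n+2) with ht | ht
    · exact Finset.sum_eq_sum_Ico_succ_bot ht _
    · rw [Ico_eq_empty (by omega), Ico_eq_empty (by omega)]
      simp [aseq, if_neg (by omega : ¬ t ≤ n)]
  have hDNstep : ∀ t, DN t = aseq P Q (n+1) t + DN (t+1) := by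
    intro t
    simp only [hDNdef]
    rcases Nat.lt_or_ge t (n+3) with ht | ht
    · exact Finset.sum_eq_sum_Ico_succ_bot ht _
    · rw [Ico_eq_empty (by omega), Ico_eq_empty (by omega)]
      simp [aseq, if_neg (by omega : ¬ t ≤ n + 1)]
  have hAN0 : AN 0 = layerCard (P × Q) n := by
    rw [hANdef, layerCard_prod_eq_sum, range_eq_Ico]
  have hDN0 : DN 0 = layerCard (P × Q) (n+1) := by
    rw [hDNdef, layerCard_prod_eq_sum, range_eq_Ico]
  have hal0 : ∀ t, 0 ≤ al t := by
    intro t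
    rw [haldef]
    have h1 := staircase_alpha (P := P) hQlc n (t+1)
    rw [← hDNtrim (t+1)] at h1
    rw [sub_nonneg, div_le_div_iff₀ hrnR hrn1R]
    calc (AN (t+1) : ℝ) * rn1 = ((AN (t+1) * layerCard (P × Q) (n+1) : ℕ) : ℝ) := by
          rw [hrn1Def]; push_cast; ring
      _ ≤ ((DN (t+1) * layerCard (P × Q) n : ℕ) : ℝ) := by
          exact_mod_cast (by rw [Nat.mul_comm (AN (t+1)), Nat.mul_comm (DN (t+1))]; exact h1)
      _ = (DN (t+1) : ℝ) * rn := by rw [hrnDef]; push_cast; ring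
  have hbe0 : ∀ t, 0 ≤ be t := by
    intro t
    rw [hbedef]
    have h1 := staircase_beta (Q := Q) hPlc n t
    have hDt : DN (t+1) = ∑ l ∈ Ico (t+1) (n+3), aseq P Q (n+1) l := by rw [hDNdef]
    rw [sub_nonneg, div_le_div_iff₀ hrn1R hrnR]
    calc (DN (t+1) : ℝ) * rn = ((layerCard (P × Q) n * DN (t+1) : ℕ) : ℝ) := by
          rw [hrnDef]; push_cast; ring
      _ ≤ ((layerCard (P × Q) (n+1) * AN t : ℕ) : ℝ) := by
          exact_mod_cast (by rw [hDt, hANdef]; exact h1)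
      _ = (AN t : ℝ) * rn1 := by rw [hrn1Def]; push_cast; ring
  have hab : ∀ t, al t + be t = (aseq P Q n t : ℝ) / rn := by
    intro t
    have h' : (AN t : ℝ) = aseq P Q n t + AN (t+1) := by exact_mod_cast hANstep t
    simp only [haldef, hbedef]
    rw [h']
    ring
  have hda : ∀ t, al t + be (t+1) = (aseq P Q (n+1) (t+1) : ℝ) / rn1 := by
    intro t
    have h' : (DN (t+1) : ℝ) = aseq P Q (n+1) (t+1) + DN (t+2) := by
      exact_mod_cast hDNstep (t+1)
    simp only [haldef, hbedef]
    rw [h']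
    ring
  have hb0 : be 0 = (aseq P Q (n+1) 0 : ℝ) / rn1 := by
    simp only [hbedef]
    have h1 : (AN 0 : ℝ) = rn := by rw [hAN0, hrnDef]
    have h2 : (DN 1 : ℝ) = rn1 - aseq P Q (n+1) 0 := by
      have := hDNstep 0
      rw [hDN0] at this
      rw [hrn1Def]
      have : (layerCard (P × Q) (n+1) : ℝ) = aseq P Q (n+1) 0 + DN 1 := by exact_mod_cast this
      linarith
    rw [h1, h2, div_self (ne_of_gt hrnR)]
    field_simp
    ring
  have hbtop : be (n+1) = 0 := by
    have h1 : AN (n+1) = 0 := by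
      have e1 : aseq P Q n (n+1) = 0 := by rw [aseq, if_neg (by omega)]
      have e2 : AN (n+2) = 0 := by simp only [hANdef]; rw [Finset.Ico_self]; simp
      rw [hANstep (n+1), e1, Nat.zero_add]
      exact e2
    have h2 : DN (n+2) = 0 := by
      have e1 : aseq P Q (n+1) (n+2) = 0 := by rw [aseq, if_neg (by omega)]
      have e2 : DN (n+3) = 0 := by simp only [hDNdef]; rw [Finset.Ico_self]; simp
      rw [hDNstep (n+2), e1, Nat.zero_add]
      exact e2
    simp only [hbedef]
    rw [h1, h2]
    simp
  -- the product flow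
  set g : P × Q → P × Q → ℝ := fun u v =>
    if v.1 = u.1 then
      be (rk u.1) * (wq (rk u.2) u.2 v.2 : ℝ) /
        ((layerCard Q (rk u.2) : ℝ) * (layerCard Q (rk u.2 + 1) : ℝ) * (layerCard P (rk u.1) : ℝ))
    else if v.2 = u.2 then
      al (rk u.1) * (wp (rk u.1) u.1 v.1 : ℝ) /
        ((layerCard P (rk u.1) : ℝ) * (layerCard P (rk u.1 + 1) : ℝ) * (layerCard Q (rk u.2) : ℝ))
    else 0 with hgdef
  have hg_nonneg : ∀ u v, 0 ≤ g u v := by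
    intro u v
    rw [hgdef]
    dsimp only
    split_ifs
    · apply div_nonneg (mul_nonneg (hbe0 _) (Nat.cast_nonneg _))
      positivity
    · apply div_nonneg (mul_nonneg (hal0 _) (Nat.cast_nonneg _))
      positivity
    · exact le_refl 0
  have hg_supp : ∀ u v, g u v ≠ 0 → u < v ∧ rk v = rk u + 1 := by
    intro u v hne
    rw [hgdef] at hne
    dsimp only at hne
    split_ifs at hne with h1 h2
    · have hwne : wq (rk u.2) u.2 v.2 ≠ 0 := by
        intro h0
        rw [h0] at hne
        simp at hne
      obtain ⟨-, hv2, hlt⟩ := hwqSupp _ _ _ hwne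
      have hrkv2 : rk v.2 = rk u.2 + 1 := mem_flayer.mp hv2
      constructor
      · apply lt_of_le_of_ne
        · rw [Prod.le_def]; exact ⟨le_of_eq h1.symm, le_of_lt hlt⟩
        · intro hEq; rw [hEq] at hlt; exact lt_irrefl _ hlt
      · rw [rk_prod' u, rk_prod' v, h1, hrkv2]; ring
    · have hwne : wp (rk u.1) u.1 v.1 ≠ 0 := by
        intro h0
        rw [h0] at hne
        simp at hne
      obtain ⟨-, hv1, hlt⟩ := hwpSupp _ _ _ hwne
      have hrkv1 : rk v.1 = rk u.1 + 1 := mem_flayer.mp hv1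
      constructor
      · apply lt_of_le_of_ne
        · rw [Prod.le_def]; exact ⟨le_of_lt hlt, le_of_eq h2.symm⟩
        · intro hEq; rw [hEq] at hlt; exact lt_irrefl _ hlt
      · rw [rk_prod' u, rk_prod' v, h2, hrkv1]; ring
    · exact absurd rfl hne
  -- helper: flows vanish when target layer is empty
  have hwq_zero : ∀ j y y', layerCard Q (j+1) = 0 → wq j y y' = 0 := by
    intro j y y' h0
    by_contra hne
    have h1 := (hwqSupp j y y' hne).2.1
    have := layerCard_pos y'
    rw [mem_flayer.mp h1] at this
    omega
  have hwp_zero : ∀ i x x', layerCard P (i+1) = 0 → wp i x x' = 0 := by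
    intro i x x' h0
    by_contra hne
    have h1 := (hwpSupp i x x' hne).2.1
    have := layerCard_pos x'
    rw [mem_flayer.mp h1] at this
    omega
  -- beta vanishes when the Q-target layer is empty
  have hbe_zero : ∀ i j, i + j = n → layerCard Q (j+1) = 0 → be i = 0 := by
    intro i j hij h0
    rcases Nat.eq_zero_or_pos i with hi0 | hi0
    · subst hi0
      rw [hb0]
      have hz : aseq P Q (n+1) 0 = 0 := by
        rw [aseq, if_pos (by omega)]
        have e : n + 1 - 0 = j + 1 := by omega
        rw [e, h0, Nat.mul_zero]
      rw [hz]
      simp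
    · have hd := hda (i-1)
      have e1 : i - 1 + 1 = i := by omega
      rw [e1] at hd
      have hz : aseq P Q (n+1) i = 0 := by
        rw [aseq, if_pos (by omega)]
        have e : n + 1 - i = j + 1 := by omega
        rw [e, h0, Nat.mul_zero]
      rw [hz] at hd
      have h2 := hal0 (i-1)
      have h3 := hbe0 i
      simp only [Nat.cast_zero, zero_div] at hd
      linarith
  -- alpha vanishes when the P-target layer is empty
  have hal_zero : ∀ i, layerCard P (i+1) = 0 → al i = 0 := by
    intro i h0
    have hANz : AN (i+1) = 0 := by
      simp only [hANdef]
      apply Finset.sum_eq_zero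
      intro l hl
      rw [aseq]
      split_ifs with hln
      · rw [layerCard_zero_of_le h0 (Finset.mem_Ico.mp hl).1, Nat.zero_mul]
      · rfl
    have hDNz : DN (i+1) = 0 := by
      simp only [hDNdef]
      apply Finset.sum_eq_zero
      intro l hl
      rw [aseq]
      split_ifs with hln
      · rw [layerCard_zero_of_le h0 (Finset.mem_Ico.mp hl).1, Nat.zero_mul]
      · rfl
    simp only [haldef]
    rw [hANz, hDNz]
    simp
  -- out-marginals
  have hG3 : ∀ u : P × Q, rk u = n → ∑ v, g u v = 1 / rn := by
    rintro ⟨x, y⟩ hu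
    have hij : rk x + rk y = n := by rw [← rk_prod x y]; exact hu
    have hpx : 0 < layerCard P (rk x) := layerCard_pos x
    have hqy : 0 < layerCard Q (rk y) := layerCard_pos y
    rw [Fintype.sum_prod_type]
    rw [← Finset.add_sum_erase _ _ (Finset.mem_univ x)]
    have hbr1 : ∑ y', g (x, y) (x, y')
        = be (rk x) / ((layerCard Q (rk y) : ℝ) * (layerCard P (rk x) : ℝ)) := by
      have hterm : ∀ y', g (x, y) (x, y')
          = be (rk x) * (wq (rk y) y y' : ℝ) /
            ((layerCard Q (rk y) : ℝ) * (layerCard Q (rk y + 1) : ℝ) *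
              (layerCard P (rk x) : ℝ)) := by
        intro y'
        simp [hgdef]
      rw [Finset.sum_congr rfl (fun y' _ => hterm y')]
      rw [← Finset.sum_div, ← Finset.mul_sum, ← Nat.cast_sum]
      rcases Nat.eq_zero_or_pos (layerCard Q (rk y + 1)) with h0 | h0
      · have hz : ∑ y', wq (rk y) y y' = 0 :=
          Finset.sum_eq_zero (fun y' _ => hwq_zero _ _ _ h0)
        rw [hz, hbe_zero (rk x) (rk y) hij h0]
        simp
      · rw [hwqRow (rk y) y (mem_flayer.mpr rfl) h0]
        rw [div_eq_div_iff (by positivity) (by positivity)]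
        ring
    have hbr2 : ∑ x' ∈ Finset.univ.erase x, ∑ y', g (x, y) (x', y')
        = al (rk x) / ((layerCard P (rk x) : ℝ) * (layerCard Q (rk y) : ℝ)) := by
      have hterm : ∀ x' ∈ Finset.univ.erase x, ∑ y', g (x, y) (x', y')
          = al (rk x) * (wp (rk x) x x' : ℝ) /
            ((layerCard P (rk x) : ℝ) * (layerCard P (rk x + 1) : ℝ) *
              (layerCard Q (rk y) : ℝ)) := by
        intro x' hx'
        have hterm2 : ∀ y', g (x, y) (x', y')
            = if y' = y then al (rk x) * (wp (rk x) x x' : ℝ) /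
                ((layerCard P (rk x) : ℝ) * (layerCard P (rk x + 1) : ℝ) *
                  (layerCard Q (rk y) : ℝ)) else 0 := by
          intro y'
          simp [hgdef, (Finset.mem_erase.mp hx').1]
        rw [Finset.sum_congr rfl (fun y' _ => hterm2 y')]
        rw [Finset.sum_ite_eq' Finset.univ y]
        simp
      rw [Finset.sum_congr rfl hterm]
      rw [Finset.sum_erase _ (by rw [hwp_self]; simp)]
      rw [← Finset.sum_div, ← Finset.mul_sum, ← Nat.cast_sum]
      rcases Nat.eq_zero_or_pos (layerCard P (rk x + 1)) with h0 | h0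
      · have hz : ∑ x', wp (rk x) x x' = 0 :=
          Finset.sum_eq_zero (fun x' _ => hwp_zero _ _ _ h0)
        rw [hz, hal_zero (rk x) h0]
        simp
      · rw [hwpRow (rk x) x (mem_flayer.mpr rfl) h0]
        rw [div_eq_div_iff (by positivity) (by positivity)]
        ring
    rw [hbr1, hbr2]
    have hsum : al (rk x) + be (rk x)
        = ((layerCard P (rk x) : ℝ) * (layerCard Q (rk y) : ℝ)) / rn := by
      rw [hab (rk x)]
      congr 1
      rw [aseq, if_pos (by omega : rk x ≤ n)]
      have e : n - rk x = rk y := by omega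
      rw [e]
      push_cast
      ring
    rw [mul_comm ((layerCard Q (rk y)) : ℝ) ((layerCard P (rk x)) : ℝ), ← add_div,
      add_comm (be (rk x)) (al (rk x)), hsum, div_div,
      mul_comm rn ((layerCard P (rk x) : ℝ) * (layerCard Q (rk y) : ℝ)), ← div_div,
      div_self (ne_of_gt (by positivity))]
  -- in-marginals
  have hG4 : ∀ v : P × Q, rk v = n + 1 → ∑ u, g u v = 1 / rn1 := by
    rintro ⟨x₀, y₀⟩ hv
    have hij : rk x₀ + rk y₀ = n + 1 := by rw [← rk_prod x₀ y₀]; exact hv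
    have hpx : 0 < layerCard P (rk x₀) := layerCard_pos x₀
    have hqy : 0 < layerCard Q (rk y₀) := layerCard_pos y₀
    rw [Fintype.sum_prod_type]
    rw [← Finset.add_sum_erase _ _ (Finset.mem_univ x₀)]
    have hbr1 : ∑ y_, g (x₀, y_) (x₀, y₀)
        = be (rk x₀) / ((layerCard Q (rk y₀) : ℝ) * (layerCard P (rk x₀) : ℝ)) := by
      rcases Nat.eq_zero_or_pos (rk y₀) with hj0 | hj0
      · have hterm : ∀ y_, g (x₀, y_) (x₀, y₀) = 0 := by
          intro y_
          have hz : wq (rk y_) y_ y₀ = 0 := by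
            by_contra hne
            have := mem_flayer.mp (hwqSupp _ _ _ hne).2.1
            omega
          simp [hgdef, hz]
        rw [Finset.sum_congr rfl (fun y_ _ => hterm y_)]
        have hx0 : rk x₀ = n + 1 := by omega
        rw [Finset.sum_const_zero, hx0, hbtop]
        simp
      · obtain ⟨j'', hj''⟩ : ∃ j'', rk y₀ = j'' + 1 := ⟨rk y₀ - 1, by omega⟩
        have hq'' : 0 < layerCard Q j'' := by
          apply layerCard_pos_of_succ
          rw [← hj'']
          exact hqy
        have hterm : ∀ y_, g (x₀, y_) (x₀, y₀)
            = be (rk x₀) * (wq j'' y_ y₀ : ℝ) /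
              ((layerCard Q j'' : ℝ) * (layerCard Q (j'' + 1) : ℝ) *
                (layerCard P (rk x₀) : ℝ)) := by
          intro y_
          rcases eq_or_ne (rk y_) j'' with he | hne
          · simp [hgdef, he]
          · have h1 : wq (rk y_) y_ y₀ = 0 := by
              by_contra hc
              have := mem_flayer.mp (hwqSupp _ _ _ hc).2.1
              omega
            have h2 : wq j'' y_ y₀ = 0 := by
              by_contra hc
              have := mem_flayer.mp (hwqSupp _ _ _ hc).1
              omega
            simp [hgdef, h1, h2]
        rw [Finset.sum_congr rfl (fun y_ _ => hterm y_)]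
        rw [← Finset.sum_div, ← Finset.mul_sum, ← Nat.cast_sum]
        rw [hwqCol j'' y₀ (mem_flayer.mpr hj''), ← hj'']
        rw [div_eq_div_iff (by positivity) (by positivity)]
        ring
    rcases Nat.eq_zero_or_pos (rk x₀) with hi0 | hi0
    · -- leftmost block : only the Q-step contributes
      have hbr2 : ∑ x_ ∈ Finset.univ.erase x₀, ∑ y_, g (x_, y_) (x₀, y₀) = 0 := by
        apply Finset.sum_eq_zero
        intro x_ hx_
        apply Finset.sum_eq_zero
        intro y_ _
        have hz : wp (rk x_) x_ x₀ = 0 := by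
          by_contra hc
          have := mem_flayer.mp (hwpSupp _ _ _ hc).2.1
          omega
        simp [hgdef, Ne.symm (Finset.mem_erase.mp hx_).1, hz]
      rw [hbr1, hbr2, add_zero]
      have hx00 : rk x₀ = 0 := hi0
      have hy0 : rk y₀ = n + 1 := by omega
      have hbeval : be (rk x₀)
          = (layerCard P (rk x₀) : ℝ) * (layerCard Q (rk y₀) : ℝ) / rn1 := by
        rw [hx00, hb0, hy0]
        congr 1
        rw [aseq, if_pos (by omega)]
        push_cast
        norm_num
      have hpR : ((layerCard P (rk x₀) : ℝ)) ≠ 0 := by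
        have : (0:ℝ) < (layerCard P (rk x₀) : ℝ) := by exact_mod_cast hpx
        exact ne_of_gt this
      have hqR : ((layerCard Q (rk y₀) : ℝ)) ≠ 0 := by
        have : (0:ℝ) < (layerCard Q (rk y₀) : ℝ) := by exact_mod_cast hqy
        exact ne_of_gt this
      have hrn1ne : rn1 ≠ 0 := ne_of_gt hrn1R
      rw [hbeval]
      field_simp
    · -- interior block
      obtain ⟨i'', hi''⟩ : ∃ i'', rk x₀ = i'' + 1 := ⟨rk x₀ - 1, by omega⟩
      have hp'' : 0 < layerCard P i'' := by
        apply layerCard_pos_of_succ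
        rw [← hi'']
        exact hpx
      have hbr2 : ∑ x_ ∈ Finset.univ.erase x₀, ∑ y_, g (x_, y_) (x₀, y₀)
          = al i'' / ((layerCard P (rk x₀) : ℝ) * (layerCard Q (rk y₀) : ℝ)) := by
        have hterm : ∀ x_ ∈ Finset.univ.erase x₀, ∑ y_, g (x_, y_) (x₀, y₀)
            = al i'' * (wp i'' x_ x₀ : ℝ) /
              ((layerCard P i'' : ℝ) * (layerCard P (i'' + 1) : ℝ) *
                (layerCard Q (rk y₀) : ℝ)) := by
          intro x_ hx_
          have hterm2 : ∀ y_, g (x_, y_) (x₀, y₀)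
              = if y₀ = y_ then al (rk x_) * (wp (rk x_) x_ x₀ : ℝ) /
                  ((layerCard P (rk x_) : ℝ) * (layerCard P (rk x_ + 1) : ℝ) *
                    (layerCard Q (rk y_) : ℝ)) else 0 := by
            intro y_
            simp [hgdef, Ne.symm (Finset.mem_erase.mp hx_).1]
          rw [Finset.sum_congr rfl (fun y_ _ => hterm2 y_)]
          rw [Finset.sum_ite_eq Finset.univ y₀]
          simp only [Finset.mem_univ, if_true]
          rcases eq_or_ne (rk x_) i'' with he | hne
          · rw [he]
          · have h1 : wp (rk x_) x_ x₀ = 0 := by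
              by_contra hc
              have := mem_flayer.mp (hwpSupp _ _ _ hc).2.1
              omega
            have h2 : wp i'' x_ x₀ = 0 := by
              by_contra hc
              have := mem_flayer.mp (hwpSupp _ _ _ hc).1
              omega
            rw [h1, h2]
            simp
        rw [Finset.sum_congr rfl hterm]
        rw [Finset.sum_erase _ (by rw [hwp_self]; simp)]
        rw [← Finset.sum_div, ← Finset.mul_sum, ← Nat.cast_sum]
        rw [hwpCol i'' x₀ (mem_flayer.mpr hi''), ← hi'']
        rw [div_eq_div_iff (by positivity) (by positivity)]
        ring
      rw [hbr1, hbr2]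
      have hd := hda i''
      rw [← hi''] at hd
      have hz : (aseq P Q (n+1) (rk x₀) : ℝ)
          = (layerCard P (rk x₀) : ℝ) * (layerCard Q (rk y₀) : ℝ) := by
        rw [aseq, if_pos (by omega : rk x₀ ≤ n + 1)]
        have e : n + 1 - rk x₀ = rk y₀ := by omega
        rw [e]
        push_cast
        ring
      rw [hz] at hd
      have hpos : (0:ℝ) < (layerCard P (rk x₀) : ℝ) * (layerCard Q (rk y₀) : ℝ) := by
        have h1 : (0:ℝ) < (layerCard P (rk x₀) : ℝ) := by exact_mod_cast hpx
        have h2 : (0:ℝ) < (layerCard Q (rk y₀) : ℝ) := by exact_mod_cast hqy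
        exact mul_pos h1 h2
      rw [mul_comm ((layerCard Q (rk y₀)) : ℝ) ((layerCard P (rk x₀)) : ℝ), ← add_div,
        add_comm (be (rk x₀)) (al i''), hd, div_div,
        mul_comm rn1 ((layerCard P (rk x₀) : ℝ) * (layerCard Q (rk y₀) : ℝ)), ← div_div,
        div_self (ne_of_gt hpos)]
  -- assemble the normalized matching inequality
  have hout : ∀ u ∈ S, ∑ v, g u v = 1 / rn :=
    fun u hu => hG3 u (mem_flayer.mp (hS hu))
  have key : (S.card : ℝ) / rn ≤ ((upSh (P × Q) n S).card : ℝ) / rn1 := by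
    have h1 : (S.card : ℝ) / rn = ∑ u ∈ S, ∑ v, g u v := by
      rw [Finset.sum_congr rfl hout, Finset.sum_const, nsmul_eq_mul]
      ring
    have h2 : ∑ u ∈ S, ∑ v, g u v = ∑ v : P × Q, ∑ u ∈ S, g u v := Finset.sum_comm
    have h3 : ∑ v : P × Q, ∑ u ∈ S, g u v = ∑ v ∈ upSh (P × Q) n S, ∑ u ∈ S, g u v := by
      symm
      apply Finset.sum_subset (Finset.subset_univ _)
      intro v _ hv
      apply Finset.sum_eq_zero
      intro u hu
      by_contra hne
      apply hv
      have hsupp := hg_supp u v hne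
      have hrku : rk u = n := mem_flayer.mp (hS hu)
      refine Finset.mem_filter.mpr ⟨mem_flayer.mpr ?_, u, hu, hsupp.1⟩
      rw [hsupp.2, hrku]
    have h4 : ∑ v ∈ upSh (P × Q) n S, ∑ u ∈ S, g u v
        ≤ ∑ v ∈ upSh (P × Q) n S, (1 / rn1) := by
      apply Finset.sum_le_sum
      intro v hv
      have hrkv : rk v = n + 1 := mem_flayer.mp (upSh_subset hv)
      rw [← hG4 v hrkv]
      apply Finset.sum_le_sum_of_subset_of_nonneg (Finset.subset_univ _)
      intro u _ _
      exact hg_nonneg u v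
    rw [h1, h2, h3]
    calc ∑ v ∈ upSh (P × Q) n S, ∑ u ∈ S, g u v
        ≤ ∑ v ∈ upSh (P × Q) n S, (1 / rn1) := h4
      _ = ((upSh (P × Q) n S).card : ℝ) / rn1 := by
          rw [Finset.sum_const, nsmul_eq_mul]; ring
  rw [div_le_div_iff₀ hrnR hrn1R] at key
  have key2 : (S.card : ℝ) * rn1 ≤ ((upSh (P × Q) n S).card : ℝ) * rn := key
  rw [hrnDef, hrn1Def] at key2
  exact_mod_cast key2
end ProdNMP

section Final
open Classical Finset
variable {α : Type*} [PartialOrder α] [Fintype α]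

lemma rk_le_card (x : α) : rk x ≤ Fintype.card α := by
  have h : Order.height x ≤ (Fintype.card α : ℕ∞) :=
    Order.height_le fun p _ => by exact_mod_cast le_of_lt p.length_lt_card
  rw [height_eq_rk] at h
  exact_mod_cast h

lemma nmpDown_isLYM (h : NMPdown α) : IsLYM α := by
  have main : ∀ m : ℕ, ∀ A : Finset α, IsAntichain (· ≤ ·) (A : Set α) →
      (∀ x ∈ A, rk x ≤ m) → ∑ x ∈ A, (1:ℝ)/layerCard α (rk x) ≤ 1 := by
    intro m
    induction m with
    | zero =>
      intro A hA hrk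
      have hsub : A ⊆ flayer α 0 := fun x hx => mem_flayer.mpr (Nat.le_zero.mp (hrk x hx))
      have hsum : ∑ x ∈ A, (1:ℝ)/layerCard α (rk x) = A.card / layerCard α 0 := by
        rw [Finset.sum_congr rfl (fun x hx => by rw [mem_flayer.mp (hsub hx)])]
        rw [Finset.sum_const, nsmul_eq_mul]
        ring
      rw [hsum]
      rcases A.eq_empty_or_nonempty with hAe | ⟨x, hx⟩
      · simp [hAe]
      · have hp0 : 0 < layerCard α 0 := by
          have := layerCard_pos x
          rwa [mem_flayer.mp (hsub hx)] at this
        rw [div_le_one (by exact_mod_cast hp0)]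
        have : A.card ≤ layerCard α 0 := by
          rw [layerCard_eq_card]
          exact Finset.card_le_card hsub
        exact_mod_cast this
    | succ m ih =>
      intro A hA hrk
      set Sm : Finset α := A.filter (fun x => rk x = m + 1) with hSm
      set T : Finset α := downSh α m Sm with hT
      rcases Sm.eq_empty_or_nonempty with hSe | ⟨s₀, hs₀⟩
      · apply ih A hA
        intro x hx
        have h1 := hrk x hx
        have h2 : rk x ≠ m + 1 := by
          intro hc
          rw [Finset.eq_empty_iff_forall_notMem] at hSe
          exact hSe x (Finset.mem_filter.mpr ⟨hx, hc⟩)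
        omega
      have hSsub : Sm ⊆ flayer α (m+1) :=
        fun x hx => mem_flayer.mpr (Finset.mem_filter.mp hx).2
      have hSA : Sm ⊆ A := Finset.filter_subset _ _
      have hTsub : T ⊆ flayer α m := downSh_subset
      have hTA : ∀ t ∈ T, t ∉ A := by
        intro t ht htA
        obtain ⟨ht1, s, hs, hts⟩ := Finset.mem_filter.mp ht
        exact hA (Finset.mem_coe.mpr htA) (Finset.mem_coe.mpr (hSA hs))
          (ne_of_lt hts) (le_of_lt hts)
      have hdisj : Disjoint (A \ Sm) T := by
        rw [Finset.disjoint_left]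
        intro x hx hx'
        exact hTA x hx' (Finset.mem_sdiff.mp hx).1
      -- the pushed-down antichain
      have hA' : IsAntichain (· ≤ ·) (((A \ Sm) ∪ T : Finset α) : Set α) := by
        intro u hu v hv huv hle
        simp only [Finset.coe_union, Set.mem_union, Finset.mem_coe] at hu hv
        have hlt : u < v := lt_of_le_of_ne hle huv
        rcases hu with hu | hu <;> rcases hv with hv | hv
        · exact hA (Finset.mem_coe.mpr (Finset.mem_sdiff.mp hu).1)
            (Finset.mem_coe.mpr (Finset.mem_sdiff.mp hv).1) huv hle
        · obtain ⟨hv1, s, hs, hvs⟩ := Finset.mem_filter.mp hv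
          have husA : u ∈ A := (Finset.mem_sdiff.mp hu).1
          have hlt2 : u < s := lt_trans hlt hvs
          exact hA (Finset.mem_coe.mpr husA) (Finset.mem_coe.mpr (hSA hs))
            (ne_of_lt hlt2) (le_of_lt hlt2)
        · have h1 : rk u = m := mem_flayer.mp (hTsub hu)
          have h2 := rk_lt_rk hlt
          have h3 : rk v ≤ m + 1 := hrk v (Finset.mem_sdiff.mp hv).1
          have h4 : rk v ≠ m + 1 := by
            intro hc
            exact (Finset.mem_sdiff.mp hv).2 (Finset.mem_filter.mpr ⟨(Finset.mem_sdiff.mp hv).1, hc⟩)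
          omega
        · have h1 : rk u = m := mem_flayer.mp (hTsub hu)
          have h2 : rk v = m := mem_flayer.mp (hTsub hv)
          have := rk_lt_rk hlt
          omega
      have hrk' : ∀ x ∈ (A \ Sm) ∪ T, rk x ≤ m := by
        intro x hx
        rcases Finset.mem_union.mp hx with hx | hx
        · have h1 := hrk x (Finset.mem_sdiff.mp hx).1
          have h2 : rk x ≠ m + 1 := by
            intro hc
            exact (Finset.mem_sdiff.mp hx).2 (Finset.mem_filter.mpr ⟨(Finset.mem_sdiff.mp hx).1, hc⟩)
          omega
        · exact le_of_eq (mem_flayer.mp (hTsub hx))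
      have hih := ih _ hA' hrk'
      rw [Finset.sum_union hdisj] at hih
      -- layer cardinalities
      have hp1 : 0 < layerCard α (m+1) := by
        have := layerCard_pos s₀
        rwa [mem_flayer.mp (hSsub hs₀)] at this
      have hp0 : 0 < layerCard α m := layerCard_pos_of_succ hp1
      have hp1R : (0:ℝ) < layerCard α (m+1) := by exact_mod_cast hp1
      have hp0R : (0:ℝ) < layerCard α m := by exact_mod_cast hp0
      -- sums over the pieces
      have hsumS : ∑ x ∈ Sm, (1:ℝ)/layerCard α (rk x) = Sm.card / layerCard α (m+1) := by
        rw [Finset.sum_congr rfl (fun x hx => by rw [mem_flayer.mp (hSsub hx)])]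
        rw [Finset.sum_const, nsmul_eq_mul]
        ring
      have hsumT : ∑ x ∈ T, (1:ℝ)/layerCard α (rk x) = T.card / layerCard α m := by
        rw [Finset.sum_congr rfl (fun x hx => by rw [mem_flayer.mp (hTsub hx)])]
        rw [Finset.sum_const, nsmul_eq_mul]
        ring
      have hsplit : ∑ x ∈ A \ Sm, (1:ℝ)/layerCard α (rk x)
          + ∑ x ∈ Sm, (1:ℝ)/layerCard α (rk x) = ∑ x ∈ A, (1:ℝ)/layerCard α (rk x) :=
        Finset.sum_sdiff hSA
      -- normalized matching comparison
      have hkey := h m Sm hSsub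
      have hcmp : (Sm.card : ℝ) / layerCard α (m+1) ≤ (T.card : ℝ) / layerCard α m := by
        rw [div_le_div_iff₀ hp1R hp0R]
        exact_mod_cast hkey
      rw [hsumT] at hih
      linarith [hih, hcmp, hsumS, hsplit]
  intro A hA
  apply main (Fintype.card α) A hA
  intro x _
  exact rk_le_card x

end Final


/-- **Harper's theorem.** If `P` and `Q` are finite log-concave LYM posets, then the
product poset `P × Q` (with componentwise order) is a LYM poset. -/
theorem product_of_logConcave_LYM_is_LYM {P Q : Type*}
    [Fintype P] [PartialOrder P] [Fintype Q] [PartialOrder Q]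
    (hP : IsLYM P) (hQ : IsLYM Q)
    (hPlc : LayerLogConcave P) (hQlc : LayerLogConcave Q) :
    IsLYM (P × Q) := by
  have h1 : NMPup (P × Q) := nmpUp_prod (isLYM_nmpUp hP) (isLYM_nmpUp hQ) hPlc hQlc
  have h2 : NMPdown (P × Q) := nmpUp_nmpDown h1
  exact nmpDown_isLYM h2
end
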